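/- arXiv:2108.01479 — 7 statements merged into one kernel-verified Lean document; each statement's English description precedes it below -/
import Mathlib

section
/- Let X be a nonnegative real-valued random variable on a probability space (Ω, 𝓕, ℙ) with finite expectation E(X). Let 0 < λ₁ < λ₂ < ⋯ < λₙ < ∞ with λ_{n+1} = ∞, and let a₁, a₂, …, aₙ be real numbers with max_{1 ≤ k ≤ n} aₖ > 0. Let v ∈ {1,…,n} be an index at which max_{1 ≤ k ≤ n} (aₖ/λₖ) is attained, i.e. aₖ/λₖ ≤ a_v/λ_v for all k. Then Σ_{i=1}^{n} aᵢ·ℙ(λᵢ ≤ X < λ_{i+1}) ≤ E(X)·a_v/λ_v, where ℙ(λₙ ≤ X < λ_{n+1}) means ℙ(X ≥ λₙ). -/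
open MeasureTheory Finset

/-- **Eisenberg–Ghosh inequality.** For a nonnegative integrable random
variable `X`, reals `0 < λ₁ < ⋯ < λₙ` (with `λ_{n+1} = ∞`), and reals
`a₁, …, aₙ` with `max aₖ > 0` and `aₖ/λₖ ≤ a_v/λ_v` for all `k`, we have
`Σ_{i=1}^n aᵢ·ℙ(λᵢ ≤ X < λ_{i+1}) ≤ E(X)·a_v/λ_v`, where the last term of the
sum is `aₙ·ℙ(X ≥ λₙ)`. -/
theorem eisenberg_ghosh
    {Ω : Type*} [MeasurableSpace Ω] (ℙ : Measure Ω) [IsProbabilityMeasure ℙ]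
    {X : Ω → ℝ} (hX : Measurable X) (hXnn : ∀ᵐ ω ∂ℙ, 0 ≤ X ω)
    (hXint : Integrable X ℙ)
    {n : ℕ} (hn : 1 ≤ n) {l : ℕ → ℝ}
    (hl1 : 0 < l 1)
    (hlmono : ∀ k, 1 ≤ k → k < n → l k < l (k + 1))
    {a : ℕ → ℝ} (hapos : ∃ k ∈ Finset.Icc 1 n, 0 < a k)
    {v : ℕ} (hv : v ∈ Finset.Icc 1 n)
    (hmax : ∀ k ∈ Finset.Icc 1 n, a k / l k ≤ a v / l v) :
    (∑ i ∈ Finset.Ico 1 n,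
        a i * (ℙ {ω | l i ≤ X ω ∧ X ω < l (i + 1)}).toReal) +
      a n * (ℙ {ω | l n ≤ X ω}).toReal ≤
    (∫ ω, X ω ∂ℙ) * a v / l v := by
  -- weak monotonicity of `l` on `[1, n]`
  have hmono' : ∀ p q, 1 ≤ p → p ≤ q → q ≤ n → l p ≤ l q := by
    intro p q hp hpq hqn
    induction q with
    | zero => omega
    | succ m ih =>
      rcases Nat.lt_or_ge p (m + 1) with h | h
      · have h1 : 1 ≤ m := by omega
        calc l p ≤ l m := ih (by omega) (by omega)
          _ ≤ l (m + 1) := le_of_lt (hlmono m h1 (by omega))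
      · have hpm : p = m + 1 := by omega
        simp [hpm]
  have hpos : ∀ k, 1 ≤ k → k ≤ n → 0 < l k := fun k h1 h2 =>
    lt_of_lt_of_le hl1 (hmono' 1 k le_rfl h1 h2)
  set c := a v / l v with hc
  obtain ⟨hv1, hvn⟩ := Finset.mem_Icc.mp hv
  obtain ⟨k, hk, hak⟩ := hapos
  obtain ⟨hk1, hkn⟩ := Finset.mem_Icc.mp hk
  have hcpos : 0 < c := lt_of_lt_of_le (div_pos hak (hpos k hk1 hkn)) (hmax k hk)
  have hale : ∀ i, 1 ≤ i → i ≤ n → a i ≤ c * l i := by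
    intro i h1 h2
    have hli := hpos i h1 h2
    have hle := hmax i (Finset.mem_Icc.mpr ⟨h1, h2⟩)
    calc a i = (a i / l i) * l i := by field_simp
      _ ≤ c * l i := mul_le_mul_of_nonneg_right hle hli.le
  -- the sets
  set A : ℕ → Set Ω := fun i => {ω | l i ≤ X ω ∧ X ω < l (i + 1)} with hA
  set B : Set Ω := {ω | l n ≤ X ω} with hB
  have hAm : ∀ i, MeasurableSet (A i) := fun i =>
    (measurableSet_le measurable_const hX).inter (measurableSet_lt hX measurable_const)
  have hBm : MeasurableSet B := measurableSet_le measurable_const hX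
  -- the layered simple function
  set g : Ω → ℝ := fun ω =>
      (∑ i ∈ Finset.Ico 1 n, (A i).indicator (fun _ => l i) ω)
        + B.indicator (fun _ => l n) ω with hg
  have hgint : Integrable g ℙ := by
    apply Integrable.add
    · exact integrable_finset_sum _ fun i _ => (integrable_const (l i)).indicator (hAm i)
    · exact (integrable_const (l n)).indicator hBm
  -- `g ≤ X` a.e.
  have hgX : ∀ᵐ ω ∂ℙ, g ω ≤ X ω := by
    filter_upwards [hXnn] with ω h0
    by_cases hcase : l n ≤ X ω
    · have hz : ∀ i ∈ Finset.Ico 1 n, (A i).indicator (fun _ => l i) ω = 0 := by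
        intro i hi
        obtain ⟨h1, h2⟩ := Finset.mem_Ico.mp hi
        apply Set.indicator_of_notMem
        rintro ⟨ha1, ha2⟩
        have hle : l (i + 1) ≤ l n := hmono' (i + 1) n (by omega) (by omega) le_rfl
        linarith
      have hgval : g ω = l n := by
        rw [hg]
        simp only
        rw [Finset.sum_eq_zero hz, Set.indicator_of_mem (show ω ∈ B from hcase), zero_add]
      rw [hgval]; exact hcase
    · by_cases hcase2 : X ω < l 1
      · have hz : ∀ i ∈ Finset.Ico 1 n, (A i).indicator (fun _ => l i) ω = 0 := by
          intro i hi
          obtain ⟨h1, h2⟩ := Finset.mem_Ico.mp hi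
          apply Set.indicator_of_notMem
          rintro ⟨ha1, ha2⟩
          have hle : l 1 ≤ l i := hmono' 1 i le_rfl h1 (by omega)
          linarith
        have hgval : g ω = 0 := by
          rw [hg]
          simp only
          rw [Finset.sum_eq_zero hz, Set.indicator_of_notMem (show ω ∉ B from hcase), add_zero]
        rw [hgval]; exact h0
      · push_neg at hcase hcase2
        -- `l 1 ≤ X ω < l n`; find the interval containing `X ω`
        have hn2 : 1 < n := by
          by_contra hn1
          have : n = 1 := by omega
          rw [this] at hcase
          linarith
        set s := (Finset.Ico 1 n).filter (fun k => l k ≤ X ω) with hs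
        have hne : s.Nonempty := ⟨1, by
          rw [hs]
          exact Finset.mem_filter.mpr ⟨Finset.mem_Ico.mpr ⟨le_rfl, hn2⟩, hcase2⟩⟩
        set j := s.max' hne with hj
        have hjs : j ∈ s := s.max'_mem hne
        obtain ⟨hjIco, hlj⟩ := Finset.mem_filter.mp hjs
        obtain ⟨hj1, hjn⟩ := Finset.mem_Ico.mp hjIco
        have hjt : X ω < l (j + 1) := by
          by_contra hcontra
          push_neg at hcontra
          rcases Nat.lt_or_ge (j + 1) n with h | h
          · have : j + 1 ∈ s := Finset.mem_filter.mpr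
              ⟨Finset.mem_Ico.mpr ⟨by omega, h⟩, hcontra⟩
            have := s.le_max' _ this
            omega
          · have hjn' : j + 1 = n := by omega
            rw [hjn'] at hcontra
            linarith
        have hωAj : ω ∈ A j := ⟨hlj, hjt⟩
        have hsum : (∑ i ∈ Finset.Ico 1 n, (A i).indicator (fun _ => l i) ω) = l j := by
          rw [Finset.sum_eq_single_of_mem j hjIco]
          · exact Set.indicator_of_mem hωAj _
          · intro i hi hij
            obtain ⟨hi1, hin⟩ := Finset.mem_Ico.mp hi
            apply Set.indicator_of_notMem
            rintro ⟨ha1, ha2⟩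
            rcases Nat.lt_or_ge i j with h | h
            · have : l (i + 1) ≤ l j := hmono' (i + 1) j (by omega) (by omega) (by omega)
              linarith
            · have hji : j + 1 ≤ i := by omega
              have : l (j + 1) ≤ l i := hmono' (j + 1) i (by omega) hji (by omega)
              linarith
        have hgval : g ω = l j := by
          rw [hg]
          simp only
          rw [hsum, Set.indicator_of_notMem (by exact fun h => absurd h (not_le.mpr hcase)),
            add_zero]
        rw [hgval]; exact hlj
  -- value of the integral of `g`
  have hI : ∀ (t : Set Ω), MeasurableSet t → ∀ r : ℝ,
      ∫ ω, t.indicator (fun _ => r) ω ∂ℙ = r * (ℙ t).toReal := by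
    intro t ht r
    rw [integral_indicator_const r ht]
    simp [mul_comm, measureReal_def]
  have hS : ∫ ω, g ω ∂ℙ =
      (∑ i ∈ Finset.Ico 1 n, l i * (ℙ (A i)).toReal) + l n * (ℙ B).toReal := by
    rw [hg]
    rw [integral_add (integrable_finset_sum _ fun i _ =>
        (integrable_const (l i)).indicator (hAm i))
      ((integrable_const (l n)).indicator hBm)]
    rw [integral_finset_sum _ fun i _ => (integrable_const (l i)).indicator (hAm i)]
    rw [hI B hBm (l n)]
    congr 1
    exact Finset.sum_congr rfl fun i _ => hI (A i) (hAm i) (l i)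
  -- chain of inequalities
  have step1 : (∑ i ∈ Finset.Ico 1 n, a i * (ℙ (A i)).toReal) + a n * (ℙ B).toReal
      ≤ c * ((∑ i ∈ Finset.Ico 1 n, l i * (ℙ (A i)).toReal) + l n * (ℙ B).toReal) := by
    rw [mul_add, Finset.mul_sum]
    apply add_le_add
    · apply Finset.sum_le_sum
      intro i hi
      obtain ⟨hi1, hin⟩ := Finset.mem_Ico.mp hi
      rw [← mul_assoc]
      exact mul_le_mul_of_nonneg_right (hale i hi1 (by omega)) ENNReal.toReal_nonneg
    · rw [← mul_assoc]
      exact mul_le_mul_of_nonneg_right (hale n hn le_rfl) ENNReal.toReal_nonneg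
  have step2 : c * ((∑ i ∈ Finset.Ico 1 n, l i * (ℙ (A i)).toReal) + l n * (ℙ B).toReal)
      ≤ c * ∫ ω, X ω ∂ℙ := by
    rw [← hS]
    exact mul_le_mul_of_nonneg_left (integral_mono_ae hgint hXint hgX) hcpos.le
  calc (∑ i ∈ Finset.Ico 1 n, a i * (ℙ (A i)).toReal) + a n * (ℙ B).toReal
      ≤ c * ∫ ω, X ω ∂ℙ := le_trans step1 step2
    _ = (∫ ω, X ω ∂ℙ) * a v / l v := by rw [hc, mul_comm, mul_div_assoc]
end

section
/- Let X be a real-valued random variable on a probability space (Ω, 𝓕, ℙ) with finite expected value E(X) and finite variance σ². Let 0 < λ₁ < λ₂ < ⋯ < λₙ < ∞ and t ≥ 0. Then ℙ(X − E(X) ≥ λ₁) + Σ_{k=2}^{n} [((λₖ + t)² − (λₖ₋₁ + t)²)/(λ₁ + t)²]·ℙ(X − E(X) ≥ λₖ) ≤ (σ² + t²)/(t + λ₁)². -/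
open MeasureTheory Finset ProbabilityTheory

private lemma cantelli_mono {n : ℕ} {l : ℕ → ℝ}
    (hlmono : ∀ k, 1 ≤ k → k < n → l k < l (k + 1)) :
    ∀ j k, 1 ≤ j → j ≤ k → k ≤ n → l j ≤ l k := by
  intro j k hj hjk hkn
  induction k with
  | zero => omega
  | succ m ih =>
    rcases Nat.lt_or_ge j (m+1) with h | h
    · have h1 : 1 ≤ m := by omega
      have := hlmono m h1 (by omega)
      exact le_trans (ih (by omega) (by omega)) this.le
    · have : j = m + 1 := by omega
      simp [this]

private lemma cantelli_tele (l : ℕ → ℝ) (t : ℝ) :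
    ∀ m, 1 ≤ m →
      ∑ k ∈ Finset.Icc 1 m,
        (if k = 1 then (l 1 + t) ^ 2 else (l k + t) ^ 2 - (l (k - 1) + t) ^ 2)
        = (l m + t) ^ 2 := by
  intro m hm
  induction m with
  | zero => omega
  | succ p ih =>
    rcases Nat.eq_or_lt_of_le hm with h | h
    · simp [← h]
    · have hp : 1 ≤ p := by omega
      rw [Finset.sum_Icc_succ_top (by omega : 1 ≤ p + 1), ih hp,
        if_neg (by omega : p + 1 ≠ 1)]
      simp

private lemma cantelli_key {n : ℕ} (hn : 1 ≤ n) {l : ℕ → ℝ}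
    (hl1 : 0 < l 1)
    (hlmono : ∀ k, 1 ≤ k → k < n → l k < l (k + 1))
    {t : ℝ} (ht : 0 ≤ t) (y : ℝ) :
    ∑ k ∈ Finset.Icc 1 n,
      (if l k ≤ y then
        (if k = 1 then (l 1 + t) ^ 2 else (l k + t) ^ 2 - (l (k - 1) + t) ^ 2)
        else 0) ≤ (y + t) ^ 2 := by
  induction n with
  | zero => omega
  | succ p ih =>
    rcases Nat.eq_or_lt_of_le hn with h | h
    · -- n = 1
      simp only [← h]
      rw [show Finset.Icc 1 1 = {1} from rfl, Finset.sum_singleton, if_pos rfl]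
      split_ifs with hy
      · have h1 : 0 ≤ l 1 + t := by positivity
        have h2 : l 1 + t ≤ y + t := by linarith
        exact pow_le_pow_left₀ h1 h2 2
      · positivity
    · -- n = p + 1, p ≥ 1
      have hp : 1 ≤ p := by omega
      have hlmono' : ∀ k, 1 ≤ k → k < p → l k < l (k + 1) := fun k hk hkp =>
        hlmono k hk (by omega)
      rw [Finset.sum_Icc_succ_top (by omega : 1 ≤ p + 1)]
      by_cases hy : l (p + 1) ≤ y
      · have hall : ∀ k ∈ Finset.Icc 1 (p + 1), l k ≤ y := by
          intro k hk
          simp only [Finset.mem_Icc] at hk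
          exact le_trans (cantelli_mono hlmono k (p + 1) hk.1 hk.2 le_rfl) hy
        rw [if_pos hy]
        have : ∑ k ∈ Finset.Icc 1 p,
            (if l k ≤ y then
              (if k = 1 then (l 1 + t) ^ 2 else (l k + t) ^ 2 - (l (k - 1) + t) ^ 2)
              else 0)
            = ∑ k ∈ Finset.Icc 1 p,
              (if k = 1 then (l 1 + t) ^ 2 else (l k + t) ^ 2 - (l (k - 1) + t) ^ 2) := by
          apply Finset.sum_congr rfl
          intro k hk
          have hk' := Finset.mem_Icc.mp hk
          rw [if_pos (hall k (Finset.mem_Icc.mpr ⟨hk'.1, by omega⟩))]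
        rw [this, cantelli_tele l t p hp, if_neg (by omega : p + 1 ≠ 1)]
        have h1 : 0 ≤ l (p + 1) + t := by
          have := cantelli_mono hlmono 1 (p + 1) le_rfl (by omega) le_rfl
          linarith
        have h2 : l (p + 1) + t ≤ y + t := by linarith
        have := pow_le_pow_left₀ h1 h2 2
        simp only [Nat.add_sub_cancel]
        linarith
      · rw [if_neg hy]
        have := ih hp hlmono'
        linarith

/-- Intermediate inequality in the generalized Cantelli inequality: for a
random variable `X` with finite variance `σ²`, reals `0 < λ₁ < ⋯ < λₙ` and
`t ≥ 0`,
`P(X − E(X) ≥ λ₁) + Σ_{k=2}^n ((λₖ+t)² − (λₖ₋₁+t)²)/(λ₁+t)² · P(X − E(X) ≥ λₖ)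
  ≤ (σ² + t²)/(t + λ₁)²`. -/
theorem generalized_cantelli_aux
    {Ω : Type*} [MeasurableSpace Ω] (P : Measure Ω) [IsProbabilityMeasure P]
    {X : Ω → ℝ} (hX : Measurable X) (hX2 : MemLp X 2 P)
    {n : ℕ} (hn : 1 ≤ n) {l : ℕ → ℝ}
    (hl1 : 0 < l 1)
    (hlmono : ∀ k, 1 ≤ k → k < n → l k < l (k + 1))
    {t : ℝ} (ht : 0 ≤ t) :
    (P {ω | l 1 ≤ X ω - ∫ x, X x ∂P}).toReal +
      ∑ k ∈ Finset.Icc 2 n,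
        ((l k + t) ^ 2 - (l (k - 1) + t) ^ 2) / (l 1 + t) ^ 2 *
          (P {ω | l k ≤ X ω - ∫ x, X x ∂P}).toReal ≤
    (variance X P + t ^ 2) / (t + l 1) ^ 2 := by
  set μ := ∫ x, X x ∂P with hμ
  set a : ℕ → ℝ := fun k =>
    if k = 1 then (l 1 + t) ^ 2 else (l k + t) ^ 2 - (l (k - 1) + t) ^ 2 with ha
  set A : ℕ → Set Ω := fun k => {ω | l k ≤ X ω - μ} with hA
  have hAm : ∀ k, MeasurableSet (A k) := fun k =>
    measurableSet_le measurable_const (hX.sub measurable_const)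
  have hc : (0:ℝ) < (l 1 + t) ^ 2 := by positivity
  -- main integral inequality
  have hE : ∑ k ∈ Finset.Icc 1 n, a k * (P (A k)).toReal ≤ variance X P + t ^ 2 := by
    have hInd : ∀ k, Integrable ((A k).indicator (fun _ => a k)) P := fun k =>
      (integrable_const _).indicator (hAm k)
    have hg_int : Integrable
        (fun ω => ∑ k ∈ Finset.Icc 1 n, (A k).indicator (fun _ => a k) ω) P :=
      integrable_finset_sum _ (fun k _ => hInd k)
    have hY2 : MemLp (fun ω => X ω - μ) 2 P := hX2.sub (memLp_const μ)
    have hsq_int : Integrable (fun ω => (X ω - μ + t) ^ 2) P :=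
      (hY2.add (memLp_const t)).integrable_sq
    have h1 : ∫ ω, (∑ k ∈ Finset.Icc 1 n, (A k).indicator (fun _ => a k) ω) ∂P
        = ∑ k ∈ Finset.Icc 1 n, a k * (P (A k)).toReal := by
      rw [integral_finset_sum _ (fun k _ => hInd k)]
      refine Finset.sum_congr rfl fun k _ => ?_
      rw [integral_indicator_const _ (hAm k), smul_eq_mul, mul_comm]
      rfl
    have hY0 : ∫ ω, (X ω - μ) ∂P = 0 := by
      rw [integral_sub (hX2.integrable one_le_two) (integrable_const μ),
        integral_const]
      simp [hμ]
    have hvar : variance X P = ∫ ω, (X ω - μ) ^ 2 ∂P := by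
      rw [variance_eq_integral hX2.aemeasurable]
    have h2 : ∫ ω, (X ω - μ + t) ^ 2 ∂P = variance X P + t ^ 2 := by
      have heq : (fun ω => (X ω - μ + t) ^ 2)
          = fun ω => ((X ω - μ) ^ 2 + (2 * t) * (X ω - μ)) + t ^ 2 := by
        funext ω; ring
      have hYint : Integrable (fun ω => X ω - μ) P :=
        (hX2.integrable one_le_two).sub (integrable_const μ)
      have hmul : Integrable (fun ω => 2 * t * (X ω - μ)) P := hYint.const_mul _
      have hadd : Integrable (fun ω => (X ω - μ) ^ 2 + 2 * t * (X ω - μ)) P :=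
        hY2.integrable_sq.add hmul
      rw [heq, integral_add hadd (integrable_const _),
        integral_add hY2.integrable_sq hmul,
        integral_const_mul, hY0, integral_const, hvar]
      simp
    calc ∑ k ∈ Finset.Icc 1 n, a k * (P (A k)).toReal
        = ∫ ω, (∑ k ∈ Finset.Icc 1 n, (A k).indicator (fun _ => a k) ω) ∂P :=
          h1.symm
      _ ≤ ∫ ω, (X ω - μ + t) ^ 2 ∂P := by
          apply integral_mono hg_int hsq_int
          intro ω
          have := cantelli_key hn hl1 hlmono ht (X ω - μ)
          simpa [Set.indicator_apply, hA, ha] using this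
      _ = variance X P + t ^ 2 := h2
  -- rewrite LHS as sum / (l 1 + t)^2
  have hsplit : Finset.Icc 1 n = insert 1 (Finset.Icc 2 n) := by
    ext x; simp only [Finset.mem_Icc, Finset.mem_insert]; omega
  have hLHS : (P (A 1)).toReal +
      ∑ k ∈ Finset.Icc 2 n,
        ((l k + t) ^ 2 - (l (k - 1) + t) ^ 2) / (l 1 + t) ^ 2 * (P (A k)).toReal
      = (∑ k ∈ Finset.Icc 1 n, a k * (P (A k)).toReal) / (l 1 + t) ^ 2 := by
    rw [hsplit, Finset.sum_insert (by simp), add_div, Finset.sum_div]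
    congr 1
    · rw [ha]; simp only [if_pos rfl, if_true]
      field_simp
    · refine Finset.sum_congr rfl fun k hk => ?_
      simp only [Finset.mem_Icc] at hk
      rw [ha]; simp only [if_neg (by omega : k ≠ 1)]
      rw [mul_div_right_comm]
  have hden : (t + l 1) ^ 2 = (l 1 + t) ^ 2 := by rw [add_comm]
  rw [hden]
  calc (P (A 1)).toReal +
      ∑ k ∈ Finset.Icc 2 n,
        ((l k + t) ^ 2 - (l (k - 1) + t) ^ 2) / (l 1 + t) ^ 2 * (P (A k)).toReal
      = (∑ k ∈ Finset.Icc 1 n, a k * (P (A k)).toReal) / (l 1 + t) ^ 2 := hLHS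
    _ ≤ (variance X P + t ^ 2) / (l 1 + t) ^ 2 := by gcongr
end

section
/- Let X be a real-valued random variable on a probability space (Ω, 𝓕, ℙ) with finite expected value E(X) and finite nonzero variance σ². Let 0 < λ₁ < λ₂ < ⋯ < λₙ < ∞ and set λ₀ = −σ²/λ₁. Then Σ_{k=1}^{n} [((λ₁λₖ + σ²)² − (λ₁λₖ₋₁ + σ²)²)/(λ₁² + σ²)²]·ℙ(X − E(X) ≥ λₖ) ≤ σ²/(σ² + λ₁²). (Note that with λ₀ = −σ²/λ₁ the k = 1 term equals (λ₁² + σ²)²/(λ₁² + σ²)²·ℙ(X − E(X) ≥ λ₁) = ℙ(X − E(X) ≥ λ₁).) -/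
open MeasureTheory Finset ProbabilityTheory


lemma gc_chain (l : ℕ → ℝ) (n : ℕ) (h : ∀ k, 1 ≤ k → k < n → l k < l (k + 1)) :
    ∀ j k, 1 ≤ j → j ≤ k → k ≤ n → l j ≤ l k := by
  intro j k hj hjk hk
  induction k with
  | zero => omega
  | succ k ih =>
    rcases Nat.lt_or_ge j (k + 1) with h' | h'
    · have h1 : l j ≤ l k := ih (by omega) (by omega)
      have h2 : l k < l (k + 1) := h k (by omega) (by omega)
      linarith
    · have : j = k + 1 := by omega
      simp [this]

lemma gc_ptwise {a v : ℝ} (ha : 0 < a) (hv : 0 < v) (y : ℝ) (l : ℕ → ℝ)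
    (hl0 : l 0 = -v / a) (hl1 : 0 < l 1) :
    ∀ n, (∀ k, 1 ≤ k → k < n → l k < l (k + 1)) →
      ∑ k ∈ Finset.Icc 1 n,
        ((a * l k + v) ^ 2 - (a * l (k - 1) + v) ^ 2) * (if l k ≤ y then (1 : ℝ) else 0)
        ≤ (a * y + v) ^ 2 := by
  intro n
  induction n with
  | zero => intro _; simp; positivity
  | succ n ih =>
    intro hmono
    by_cases hy : l (n + 1) ≤ y
    · have hchain := gc_chain l (n + 1) hmono
      have hall : ∀ k ∈ Finset.Icc 1 (n + 1), l k ≤ y := by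
        intro k hk
        simp only [Finset.mem_Icc] at hk
        exact le_trans (hchain k (n + 1) hk.1 hk.2 le_rfl) hy
      have key : ∑ k ∈ Finset.Icc 1 (n + 1),
          ((a * l k + v) ^ 2 - (a * l (k - 1) + v) ^ 2) * (if l k ≤ y then (1 : ℝ) else 0)
          = (a * l (n + 1) + v) ^ 2 - (a * l 0 + v) ^ 2 := by
        rw [Finset.sum_congr rfl (fun k hk => by
          rw [if_pos (hall k hk), mul_one])]
        rw [show Finset.Icc 1 (n + 1) = Finset.Ico 1 (n + 2) from by rw [show n + 2 = n + 1 + 1 from rfl, Finset.Ico_add_one_right_eq_Icc]]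
        rw [Finset.sum_Ico_eq_sum_range]
        have hrw : ∀ i, (a * l (1 + i) + v) ^ 2 - (a * l (1 + i - 1) + v) ^ 2
            = (fun j => (a * l j + v) ^ 2) (i + 1) - (fun j => (a * l j + v) ^ 2) i := by
          intro i
          have : 1 + i - 1 = i := by omega
          rw [this, Nat.add_comm 1 i]
        simp only [show n + 2 - 1 = n + 1 from rfl]
        rw [Finset.sum_congr rfl (fun i _ => hrw i)]
        exact Finset.sum_range_sub (fun j => (a * l j + v) ^ 2) (n + 1)
      rw [key]
      have h0 : (a * l 0 + v) = 0 := by rw [hl0]; field_simp; ring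
      have hpos : 0 < l (n + 1) := lt_of_lt_of_le hl1 (hchain 1 (n + 1) le_rfl (by omega) le_rfl)
      have h1 : 0 ≤ a * l (n + 1) + v := by positivity
      have h2 : a * l (n + 1) + v ≤ a * y + v := by nlinarith
      rw [h0]
      nlinarith
    · rw [Finset.sum_Icc_succ_top (by omega : 1 ≤ n + 1), if_neg hy, mul_zero, add_zero]
      exact ih (fun k hk hk' => hmono k hk (by omega))

/-- **Generalization of Cantelli's inequality.**
For a random variable `X` with finite nonzero variance `σ²`, reals
`0 < λ₁ < ⋯ < λₙ` and `λ₀ = −σ²/λ₁`,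
`Σ_{k=1}^n ((λ₁λₖ + σ²)² − (λ₁λₖ₋₁ + σ²)²)/(λ₁² + σ²)² · P(X − E(X) ≥ λₖ)
  ≤ σ²/(σ² + λ₁²)`. -/
theorem generalized_cantelli
    {Ω : Type*} [MeasurableSpace Ω] (P : Measure Ω) [IsProbabilityMeasure P]
    {X : Ω → ℝ} (hX : Measurable X) (hX2 : MemLp X 2 P)
    (hvar : 0 < variance X P)
    {n : ℕ} (hn : 1 ≤ n) {l : ℕ → ℝ}
    (hl0 : l 0 = -(variance X P) / l 1)
    (hl1 : 0 < l 1)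
    (hlmono : ∀ k, 1 ≤ k → k < n → l k < l (k + 1)) :
    ∑ k ∈ Finset.Icc 1 n,
        ((l 1 * l k + variance X P) ^ 2 -
            (l 1 * l (k - 1) + variance X P) ^ 2) /
          (l 1 ^ 2 + variance X P) ^ 2 *
          (P {ω | l k ≤ X ω - ∫ x, X x ∂P}).toReal ≤
      variance X P / (variance X P + l 1 ^ 2) := by
  set v : ℝ := variance X P with hv
  set a : ℝ := l 1 with ha
  set m : ℝ := ∫ x, X x ∂P with hm
  set Y : Ω → ℝ := fun ω => X ω - m with hY
  have hC : (0:ℝ) < (a ^ 2 + v) ^ 2 := by positivity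
  have hmeas : ∀ k, MeasurableSet {ω | l k ≤ Y ω} :=
    fun k => measurableSet_le measurable_const (hX.sub measurable_const)
  have hXint : Integrable X P := hX2.integrable one_le_two
  have hYm : MemLp Y 2 P := hX2.sub (memLp_const m)
  have hZm : MemLp (fun ω => a * Y ω + v) 2 P := (hYm.const_mul a).add (memLp_const v)
  have hZ2int : Integrable (fun ω => (a * Y ω + v) ^ 2) P := hZm.integrable_sq
  -- each term is an integral of an indicator
  have hterm : ∀ k, (P {ω | l k ≤ Y ω}).toReal
      = ∫ ω, (if l k ≤ Y ω then (1:ℝ) else 0) ∂P := by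
    intro k
    rw [← measureReal_def, ← integral_indicator_one (hmeas k)]
    refine integral_congr_ae (ae_of_all _ fun ω => ?_)
    simp [Set.indicator_apply]
  have hintind : ∀ k, Integrable (fun ω => (if l k ≤ Y ω then (1:ℝ) else 0)) P := by
    intro k
    have := (integrable_const (1:ℝ)).indicator (μ := P) (hmeas k)
    refine this.congr (ae_of_all _ fun ω => ?_)
    simp [Set.indicator_apply]
  -- LHS as an integral
  have hLHS : ∑ k ∈ Finset.Icc 1 n,
      ((a * l k + v) ^ 2 - (a * l (k - 1) + v) ^ 2) / (a ^ 2 + v) ^ 2 *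
        (P {ω | l k ≤ Y ω}).toReal
      = ∫ ω, (∑ k ∈ Finset.Icc 1 n,
          ((a * l k + v) ^ 2 - (a * l (k - 1) + v) ^ 2) / (a ^ 2 + v) ^ 2 *
            (if l k ≤ Y ω then (1:ℝ) else 0)) ∂P := by
    rw [integral_finset_sum _ (fun k _ => (hintind k).const_mul _)]
    refine Finset.sum_congr rfl fun k _ => ?_
    rw [hterm k, ← integral_const_mul]
  rw [hLHS]
  -- pointwise bound
  have hptw : ∀ ω, (∑ k ∈ Finset.Icc 1 n,
      ((a * l k + v) ^ 2 - (a * l (k - 1) + v) ^ 2) / (a ^ 2 + v) ^ 2 *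
        (if l k ≤ Y ω then (1:ℝ) else 0))
      ≤ (a * Y ω + v) ^ 2 / (a ^ 2 + v) ^ 2 := by
    intro ω
    have hpt := gc_ptwise hl1 hvar (Y ω) l hl0 hl1 n hlmono
    have hrw : (∑ k ∈ Finset.Icc 1 n,
        ((a * l k + v) ^ 2 - (a * l (k - 1) + v) ^ 2) / (a ^ 2 + v) ^ 2 *
          (if l k ≤ Y ω then (1:ℝ) else 0))
        = (∑ k ∈ Finset.Icc 1 n,
          ((a * l k + v) ^ 2 - (a * l (k - 1) + v) ^ 2) *
            (if l k ≤ Y ω then (1:ℝ) else 0)) / (a ^ 2 + v) ^ 2 := by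
      rw [Finset.sum_div]
      exact Finset.sum_congr rfl fun k _ => (div_mul_eq_mul_div _ _ _)
    rw [hrw]
    gcongr
  -- integrability
  have hgint : Integrable (fun ω => ∑ k ∈ Finset.Icc 1 n,
      ((a * l k + v) ^ 2 - (a * l (k - 1) + v) ^ 2) / (a ^ 2 + v) ^ 2 *
        (if l k ≤ Y ω then (1:ℝ) else 0)) P :=
    integrable_finset_sum _ (fun k _ => (hintind k).const_mul _)
  have hhint : Integrable (fun ω => (a * Y ω + v) ^ 2 / (a ^ 2 + v) ^ 2) P :=
    hZ2int.div_const _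
  have hYint : Integrable Y P := hXint.sub (integrable_const m)
  have hY2int : Integrable (fun ω => Y ω ^ 2) P := hYm.integrable_sq
  have hEY : ∫ ω, Y ω ∂P = 0 := by
    simp only [hY]
    rw [integral_sub hXint (integrable_const m), integral_const, probReal_univ]
    simp [hm]
  have hEY2 : ∫ ω, Y ω ^ 2 ∂P = v := by
    rw [hv, variance_eq_integral hX2.aemeasurable]
  have hEZ : ∫ ω, (a * Y ω + v) ^ 2 ∂P = a ^ 2 * v + v ^ 2 := by
    have hexp : ∀ ω, (a * Y ω + v) ^ 2
        = a ^ 2 * Y ω ^ 2 + ((2 * a * v) * Y ω + v ^ 2) := by intro ω; ring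
    simp_rw [hexp]
    have i1 : Integrable (fun ω => 2 * a * v * Y ω + v ^ 2) P :=
      (hYint.const_mul _).add (integrable_const _)
    rw [integral_add (hY2int.const_mul _) i1,
      integral_add (hYint.const_mul _) (integrable_const _),
      integral_const_mul, integral_const_mul, integral_const, hEY, hEY2, probReal_univ]
    simp
  calc ∫ ω, (∑ k ∈ Finset.Icc 1 n,
        ((a * l k + v) ^ 2 - (a * l (k - 1) + v) ^ 2) / (a ^ 2 + v) ^ 2 *
          (if l k ≤ Y ω then (1:ℝ) else 0)) ∂P
      ≤ ∫ ω, (a * Y ω + v) ^ 2 / (a ^ 2 + v) ^ 2 ∂P :=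
        integral_mono hgint hhint hptw
    _ = (∫ ω, (a * Y ω + v) ^ 2 ∂P) / (a ^ 2 + v) ^ 2 := integral_div _ _
    _ = v / (v + a ^ 2) := by
        rw [hEZ, div_eq_div_iff hC.ne' (by positivity)]
        ring
end

section
/- Let X₁, X₂, …, X_N be independent real-valued random variables on a probability space (Ω, 𝓕, ℙ) with aᵢ ≤ Xᵢ ≤ bᵢ almost surely for each i, where aᵢ < bᵢ, and let S_N = X₁ + X₂ + ⋯ + X_N. Let 0 < λ₁ < λ₂ < ⋯ < λₙ < ∞. Then for every s > 0, ℙ(S_N − E(S_N) ≥ λ₁) + Σ_{k=2}^{n} [e^{s(λₖ − λ₁)} − e^{s(λₖ₋₁ − λ₁)}]·ℙ(S_N − E(S_N) ≥ λₖ) ≤ e^{−sλ₁ + (s²/8)·Σ_{i=1}^{N}(bᵢ − aᵢ)²}. -/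
open MeasureTheory Finset ProbabilityTheory

private lemma mono_aux {f f' : ℝ → ℝ} (hf : ∀ x, HasDerivAt f (f' x) x)
    (h0 : ∀ x, 0 ≤ x → 0 ≤ f' x) {x : ℝ} (hx : 0 ≤ x) : f 0 ≤ f x := by
  have hcont : ContinuousOn f (Set.Ici 0) :=
    (continuous_iff_continuousAt.2 fun y => (hf y).continuousAt).continuousOn
  have hdiff : DifferentiableOn ℝ f (interior (Set.Ici (0:ℝ))) :=
    fun y _ => (hf y).differentiableAt.differentiableWithinAt
  have := monotoneOn_of_deriv_nonneg (convex_Ici 0) hcont hdiff (fun y hy => by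
    rw [(hf y).deriv]
    exact h0 y (le_of_lt (by rwa [interior_Ici] at hy)))
  exact this Set.self_mem_Ici hx hx

private lemma key_analytic {p h : ℝ} (hp0 : 0 ≤ p) (hp1 : p ≤ 1) (hh : 0 ≤ h) :
    (1 - p) * Real.exp (-p * h) + p * Real.exp ((1 - p) * h) ≤ Real.exp (h ^ 2 / 8) := by
  set d : ℝ → ℝ := fun u => 1 - p + p * Real.exp u with hd_def
  have hdpos : ∀ u, 0 < d u := by
    intro u
    rcases eq_or_lt_of_le hp0 with h' | h'
    · simp [hd_def, ← h']
    · have := Real.exp_pos u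
      have : 0 < p * Real.exp u := by positivity
      simp only [hd_def]; linarith
  set q : ℝ → ℝ := fun u => p * Real.exp u / d u with hq_def
  have hq0 : ∀ u, 0 ≤ q u := fun u =>
    div_nonneg (by positivity) (hdpos u).le
  have hq1 : ∀ u, q u ≤ 1 := fun u => by
    rw [hq_def, div_le_one (hdpos u)]; simp only [hd_def]; linarith
  have hd' : ∀ u, HasDerivAt d (p * Real.exp u) u := fun u =>
    ((Real.hasDerivAt_exp u).const_mul p).const_add (1 - p)
  have hq' : ∀ u, HasDerivAt q (q u * (1 - q u)) u := by
    intro u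
    have h1 : HasDerivAt (fun u => p * Real.exp u) (p * Real.exp u) u :=
      (Real.hasDerivAt_exp u).const_mul p
    have := h1.div (hd' u) (hdpos u).ne'
    refine this.congr_deriv ?_
    have hdu := (hdpos u).ne'
    simp only [hq_def]
    field_simp
  -- E u = u/4 - q u + p, E' = 1/4 - q(1-q) ≥ 0
  set E : ℝ → ℝ := fun u => u / 4 - q u + p with hE_def
  have hE' : ∀ u, HasDerivAt E (1 / 4 - q u * (1 - q u)) u := by
    intro u
    have := (((hasDerivAt_id u).div_const 4).sub (hq' u)).add_const p
    simpa [hE_def] using this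
  have hE0 : E 0 = 0 := by simp [hE_def, hq_def, hd_def]
  have hEnonneg : ∀ u, 0 ≤ u → 0 ≤ E u := by
    intro u hu
    have := mono_aux hE' (fun x _ => by nlinarith [sq_nonneg (q x - 1/2), hq0 x, hq1 x]) hu
    linarith [hE0 ▸ this]
  -- F u = u^2/8 - (log (d u) - p * u)
  set F : ℝ → ℝ := fun u => u ^ 2 / 8 - (Real.log (d u) - p * u) with hF_def
  have hF' : ∀ u, HasDerivAt F (u / 4 - (q u - p)) u := by
    intro u
    have hlog : HasDerivAt (fun u => Real.log (d u)) (p * Real.exp u / d u) u :=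
      (hd' u).log (hdpos u).ne'
    have h2 : HasDerivAt (fun u : ℝ => u ^ 2 / 8) (u / 4) u := by
      have := (hasDerivAt_pow 2 u).div_const 8
      exact this.congr_deriv (by norm_num; ring)
    have := h2.sub (hlog.sub ((hasDerivAt_id u).const_mul p))
    refine this.congr_deriv ?_
    simp only [hq_def, mul_one]
  have hF0 : F 0 = 0 := by simp [hF_def, hd_def]
  have hFh : 0 ≤ F h := by
    have := mono_aux hF' (fun x hx => by
      have := hEnonneg x hx
      simp only [hE_def] at this; linarith) hh
    linarith [hF0 ▸ this]
  -- conclude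
  have hLHS : (1 - p) * Real.exp (-p * h) + p * Real.exp ((1 - p) * h)
      = Real.exp (Real.log (d h) - p * h) := by
    rw [Real.exp_sub, Real.exp_log (hdpos h)]
    simp only [hd_def]
    rw [eq_div_iff (Real.exp_ne_zero _)]
    have e1 : Real.exp (-p * h) * Real.exp (p * h) = 1 := by
      rw [← Real.exp_add]; simp
    have e2 : Real.exp ((1 - p) * h) * Real.exp (p * h) = Real.exp h := by
      rw [← Real.exp_add]; ring_nf
    linear_combination (1 - p) * e1 + p * e2
  rw [hLHS]
  apply Real.exp_le_exp.2
  simp only [hF_def] at hFh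
  linarith

private lemma hoeffding_one {Ω : Type*} [MeasurableSpace Ω] (P : Measure Ω)
    [IsProbabilityMeasure P] {Y : Ω → ℝ} (hY : Measurable Y) {a b : ℝ} (hab : a < b)
    (hbdd : ∀ᵐ ω ∂P, Y ω ∈ Set.Icc a b) (hmean : ∫ ω, Y ω ∂P = 0) {s : ℝ} (hs : 0 ≤ s) :
    ∫ ω, Real.exp (s * Y ω) ∂P ≤ Real.exp (s ^ 2 * (b - a) ^ 2 / 8) := by
  have hba : (0:ℝ) < b - a := by linarith
  have hintY : Integrable Y P := by
    refine Integrable.mono' (integrable_const (max |a| |b|)) hY.aestronglyMeasurable ?_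
    filter_upwards [hbdd] with ω hω
    rw [Real.norm_eq_abs]
    rcases abs_cases (Y ω) with ⟨h1, _⟩ | ⟨h1, _⟩
    · rw [h1]; exact le_max_of_le_right (le_abs_self b |>.trans' hω.2)
    · rw [h1]; exact le_max_of_le_left ((neg_le_abs a).trans' (by linarith [hω.1]))
  have ha0 : a ≤ 0 := by
    have := integral_mono_ae (integrable_const a) hintY
      (hbdd.mono fun ω hω => hω.1)
    simpa [hmean] using this
  have hb0 : 0 ≤ b := by
    have := integral_mono_ae hintY (integrable_const b)
      (hbdd.mono fun ω hω => hω.2)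
    simpa [hmean] using this
  -- pointwise convexity bound
  have hpt : ∀ᵐ ω ∂P, Real.exp (s * Y ω) ≤
      (b - Y ω) / (b - a) * Real.exp (s * a) + (Y ω - a) / (b - a) * Real.exp (s * b) := by
    filter_upwards [hbdd] with ω hω
    have w1 : (0:ℝ) ≤ (b - Y ω) / (b - a) := div_nonneg (by linarith [hω.2]) hba.le
    have w2 : (0:ℝ) ≤ (Y ω - a) / (b - a) := div_nonneg (by linarith [hω.1]) hba.le
    have wsum : (b - Y ω) / (b - a) + (Y ω - a) / (b - a) = 1 := by
      field_simp; ring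
    have := convexOn_exp.2 (Set.mem_univ (s * a)) (Set.mem_univ (s * b)) w1 w2 wsum
    simp only [smul_eq_mul] at this
    refine le_of_eq_of_le (congrArg Real.exp ?_) this
    field_simp
    ring
  have hintexp : Integrable (fun ω => Real.exp (s * Y ω)) P := by
    refine Integrable.mono' (integrable_const (Real.exp (s * b)))
      ((hY.const_mul s).exp).aestronglyMeasurable ?_
    filter_upwards [hbdd] with ω hω
    rw [Real.norm_eq_abs, abs_of_pos (Real.exp_pos _)]
    exact Real.exp_le_exp.2 (mul_le_mul_of_nonneg_left hω.2 hs)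
  have hintRHS : Integrable (fun ω =>
      (b - Y ω) / (b - a) * Real.exp (s * a) + (Y ω - a) / (b - a) * Real.exp (s * b)) P := by
    apply Integrable.add
    · exact ((((integrable_const b).sub hintY).div_const _).mul_const _)
    · exact (((hintY.sub (integrable_const a)).div_const _).mul_const _)
  have hle := integral_mono_ae hintexp hintRHS hpt
  have hval : ∫ ω, ((b - Y ω) / (b - a) * Real.exp (s * a)
      + (Y ω - a) / (b - a) * Real.exp (s * b)) ∂P
      = b / (b - a) * Real.exp (s * a) + (-a) / (b - a) * Real.exp (s * b) := by
    have hrw : ∀ ω : Ω, (b - Y ω) / (b - a) * Real.exp (s * a)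
        + (Y ω - a) / (b - a) * Real.exp (s * b)
        = (b / (b - a) * Real.exp (s * a) + (-a) / (b - a) * Real.exp (s * b))
          + Y ω * ((Real.exp (s * b) - Real.exp (s * a)) / (b - a)) := by
      intro ω; field_simp; ring
    simp_rw [hrw]
    rw [integral_add (integrable_const _) (hintY.mul_const _), integral_const,
      integral_mul_const, hmean]
    simp
  rw [hval] at hle
  refine hle.trans ?_
  -- apply key_analytic with p = -a/(b-a), h = s*(b-a)
  have hp0 : 0 ≤ -a / (b - a) := div_nonneg (by linarith) hba.le
  have hp1 : -a / (b - a) ≤ 1 := by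
    rw [div_le_one hba]; linarith
  have hh : 0 ≤ s * (b - a) := mul_nonneg hs hba.le
  have key := key_analytic hp0 hp1 hh
  have e1 : (1 - -a / (b - a)) = b / (b - a) := by field_simp; ring
  have e2 : -(-a / (b - a)) * (s * (b - a)) = s * a := by field_simp
  have e3 : (1 - -a / (b - a)) * (s * (b - a)) = s * b := by field_simp; ring
  have e4 : (s * (b - a)) ^ 2 / 8 = s ^ 2 * (b - a) ^ 2 / 8 := by ring
  rw [e1, e2, e4] at key
  rw [e1] at e3
  rw [e3] at key
  exact key

private lemma hoeffding_sum {Ω : Type*} [MeasurableSpace Ω] (P : Measure Ω)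
    [IsProbabilityMeasure P] {N : ℕ} {X : Fin N → Ω → ℝ} (hXmeas : ∀ i, Measurable (X i))
    (hindep : iIndepFun X P)
    {a b : Fin N → ℝ} (hab : ∀ i, a i < b i)
    (hbdd : ∀ i, ∀ᵐ ω ∂P, X i ω ∈ Set.Icc (a i) (b i)) {s : ℝ} (hs : 0 ≤ s) :
    ∫ ω, Real.exp (s * ((∑ i, X i ω) - ∫ x, (∑ i, X i x) ∂P)) ∂P
      ≤ Real.exp (s ^ 2 / 8 * ∑ i, (b i - a i) ^ 2) := by
  have hintX : ∀ i, Integrable (X i) P := by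
    intro i
    refine Integrable.mono' (integrable_const (max |a i| |b i|))
      (hXmeas i).aestronglyMeasurable ?_
    filter_upwards [hbdd i] with ω hω
    rw [Real.norm_eq_abs]
    rcases abs_cases (X i ω) with ⟨h1, _⟩ | ⟨h1, _⟩
    · rw [h1]; exact le_max_of_le_right ((le_abs_self (b i)).trans' hω.2)
    · rw [h1]; exact le_max_of_le_left ((neg_le_abs (a i)).trans' (by linarith [hω.1]))
  set m : Fin N → ℝ := fun i => ∫ x, X i x ∂P with hm
  have hmu : ∫ x, (∑ i, X i x) ∂P = ∑ i, m i := by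
    rw [integral_finset_sum _ fun i _ => hintX i]
  have hintexp : ∀ i, Integrable (fun ω => Real.exp (s * X i ω)) P := by
    intro i
    refine Integrable.mono' (integrable_const (Real.exp (s * b i)))
      (((hXmeas i).const_mul s).exp).aestronglyMeasurable ?_
    filter_upwards [hbdd i] with ω hω
    rw [Real.norm_eq_abs, abs_of_pos (Real.exp_pos _)]
    exact Real.exp_le_exp.2 (mul_le_mul_of_nonneg_left hω.2 hs)
  -- mgf of each centered variable
  have hone : ∀ i, ∫ ω, Real.exp (s * X i ω) ∂P
      ≤ Real.exp (s * m i + s ^ 2 * (b i - a i) ^ 2 / 8) := by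
    intro i
    have hY : Measurable fun ω => X i ω - m i := (hXmeas i).sub_const _
    have hmean : ∫ ω, (X i ω - m i) ∂P = 0 := by
      rw [integral_sub (hintX i) (integrable_const _), integral_const]
      simp [hm]
    have hb : ∀ᵐ ω ∂P, X i ω - m i ∈ Set.Icc (a i - m i) (b i - m i) := by
      filter_upwards [hbdd i] with ω hω
      exact ⟨by linarith [hω.1], by linarith [hω.2]⟩
    have := hoeffding_one P hY (by linarith [hab i]) hb hmean hs
    have heq : ∫ ω, Real.exp (s * (X i ω - m i)) ∂P
        = Real.exp (-(s * m i)) * ∫ ω, Real.exp (s * X i ω) ∂P := by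
      rw [← integral_const_mul]
      congr 1 with ω
      rw [← Real.exp_add]; ring_nf
    rw [heq] at this
    have h2 : b i - m i - (a i - m i) = b i - a i := by ring
    rw [h2] at this
    have h3 := mul_le_mul_of_nonneg_left this (Real.exp_pos (s * m i)).le
    rw [← mul_assoc, ← Real.exp_add] at h3
    simp only [add_neg_cancel, Real.exp_zero, one_mul] at h3
    rw [Real.exp_add]
    exact h3
  -- use independence
  have hmgf : mgf (∑ i, X i) P s = ∏ i, mgf (X i) P s :=
    hindep.mgf_sum hXmeas Finset.univ
  have hfin : ∫ ω, Real.exp (s * ((∑ i, X i ω) - ∫ x, (∑ i, X i x) ∂P)) ∂P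
      = Real.exp (-(s * ∑ i, m i)) * mgf (∑ i, X i) P s := by
    rw [mgf, ← integral_const_mul, hmu]
    congr 1 with ω
    rw [← Real.exp_add, Finset.sum_apply]
    ring_nf
  rw [hfin, hmgf]
  have hprod : ∏ i, mgf (X i) P s ≤ ∏ i, Real.exp (s * m i + s ^ 2 * (b i - a i) ^ 2 / 8) := by
    refine Finset.prod_le_prod (fun i _ => mgf_nonneg) fun i _ => hone i
  calc Real.exp (-(s * ∑ i, m i)) * ∏ i, mgf (X i) P s
      ≤ Real.exp (-(s * ∑ i, m i)) * ∏ i, Real.exp (s * m i + s ^ 2 * (b i - a i) ^ 2 / 8) := by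
        gcongr
    _ = Real.exp (s ^ 2 / 8 * ∑ i, (b i - a i) ^ 2) := by
        rw [← Real.exp_sum, ← Real.exp_add]
        congr 1
        rw [Finset.sum_add_distrib, ← Finset.mul_sum]
        have h8 : ∑ i, s ^ 2 * (b i - a i) ^ 2 / 8 = s ^ 2 / 8 * ∑ i, (b i - a i) ^ 2 := by
          rw [Finset.mul_sum]
          exact Finset.sum_congr rfl fun i _ => by ring
        rw [h8]; ring

private lemma telescope {n : ℕ} (hn : 1 ≤ n) {l : ℕ → ℝ} (hl1 : 0 < l 1)
    (hlmono : ∀ k, 1 ≤ k → k < n → l k < l (k + 1)) {s t : ℝ} (hs : 0 < s) :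
    (if l 1 ≤ t then (1:ℝ) else 0) +
      ∑ k ∈ Finset.Icc 2 n,
        (Real.exp (s * (l k - l 1)) - Real.exp (s * (l (k - 1) - l 1))) *
          (if l k ≤ t then (1:ℝ) else 0) ≤ Real.exp (s * (t - l 1)) := by
  have hmono : ∀ j k, 1 ≤ j → j ≤ k → k ≤ n → l j ≤ l k := by
    intro j k hj hjk hkn
    induction k, hjk using Nat.le_induction with
    | base => exact le_rfl
    | succ m hm ih =>
      have h1 : 1 ≤ m := le_trans hj hm
      have h2 : m < n := by omega
      exact (ih (by omega)).trans (hlmono m h1 h2).le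
  by_cases ht : l 1 ≤ t
  · -- main case
    have key : ∀ m, 1 ≤ m → m ≤ n →
        (l m ≤ t → (1:ℝ) + ∑ k ∈ Finset.Icc 2 m,
          (Real.exp (s * (l k - l 1)) - Real.exp (s * (l (k - 1) - l 1))) *
            (if l k ≤ t then (1:ℝ) else 0) = Real.exp (s * (l m - l 1))) ∧
        (1:ℝ) + ∑ k ∈ Finset.Icc 2 m,
          (Real.exp (s * (l k - l 1)) - Real.exp (s * (l (k - 1) - l 1))) *
            (if l k ≤ t then (1:ℝ) else 0) ≤ Real.exp (s * (t - l 1)) := by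
      intro m hm
      induction m, hm using Nat.le_induction with
      | base =>
        intro _
        rw [show Finset.Icc 2 1 = ∅ from Finset.Icc_eq_empty (by omega)]
        simp only [Finset.sum_empty, add_zero]
        constructor
        · intro _; rw [sub_self, mul_zero, Real.exp_zero]
        · rw [show (1:ℝ) = Real.exp 0 from (Real.exp_zero).symm]
          exact Real.exp_le_exp.2 (mul_nonneg hs.le (by linarith))
      | succ m hm ih =>
        intro hmn
        have ihm := ih (by omega)
        rw [Finset.sum_Icc_succ_top (by omega : 2 ≤ m + 1)]
        simp only [Nat.add_sub_cancel]
        by_cases hlt : l (m + 1) ≤ t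
        · have hlm : l m ≤ t := le_trans (hlmono m hm (by omega)).le hlt
          rw [if_pos hlt, ← add_assoc, ihm.1 hlm]
          constructor
          · intro _; ring
          · have : Real.exp (s * (l m - l 1)) +
                (Real.exp (s * (l (m+1) - l 1)) - Real.exp (s * (l m - l 1))) * 1
                = Real.exp (s * (l (m+1) - l 1)) := by ring
            rw [this]
            exact Real.exp_le_exp.2 (by nlinarith)
        · rw [if_neg hlt, ← add_assoc]
          constructor
          · intro h; exact absurd h hlt
          · simpa using ihm.2
    have := (key n hn le_rfl).2
    rw [if_pos ht]
    exact this
  · -- t < l 1 : everything vanishes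
    rw [if_neg ht]
    have hz : ∀ k ∈ Finset.Icc 2 n,
        (Real.exp (s * (l k - l 1)) - Real.exp (s * (l (k - 1) - l 1))) *
          (if l k ≤ t then (1:ℝ) else 0) = 0 := by
      intro k hk
      rw [Finset.mem_Icc] at hk
      have : l 1 ≤ l k := hmono 1 k le_rfl (by omega) hk.2
      rw [if_neg (by push_neg at ht; linarith), mul_zero]
    rw [Finset.sum_congr rfl hz]
    simp only [Finset.sum_const_zero, zero_add]
    exact (Real.exp_pos _).le

/-- Intermediate inequality in the generalized Hoeffding inequality: for
independent random variables `Xᵢ ∈ [aᵢ, bᵢ]` a.s., `S_N = Σᵢ Xᵢ`,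
`0 < λ₁ < ⋯ < λₙ` and any `s > 0`,
`P(S_N − E(S_N) ≥ λ₁)
  + Σ_{k=2}^n (e^{s(λₖ−λ₁)} − e^{s(λₖ₋₁−λ₁)})·P(S_N − E(S_N) ≥ λₖ)
  ≤ e^{−sλ₁ + (s²/8)·Σᵢ(bᵢ−aᵢ)²}`. -/
theorem generalized_hoeffding_aux
    {Ω : Type*} [MeasurableSpace Ω] (P : Measure Ω) [IsProbabilityMeasure P]
    {N : ℕ} {X : Fin N → Ω → ℝ} (hXmeas : ∀ i, Measurable (X i))
    (hindep : iIndepFun X P)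
    {a b : Fin N → ℝ} (hab : ∀ i, a i < b i)
    (hbdd : ∀ i, ∀ᵐ ω ∂P, X i ω ∈ Set.Icc (a i) (b i))
    {n : ℕ} (hn : 1 ≤ n) {l : ℕ → ℝ}
    (hl1 : 0 < l 1)
    (hlmono : ∀ k, 1 ≤ k → k < n → l k < l (k + 1))
    {s : ℝ} (hs : 0 < s) :
    (P {ω | l 1 ≤ (∑ i, X i ω) - ∫ x, (∑ i, X i x) ∂P}).toReal +
      ∑ k ∈ Finset.Icc 2 n,
        (Real.exp (s * (l k - l 1)) - Real.exp (s * (l (k - 1) - l 1))) *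
          (P {ω | l k ≤ (∑ i, X i ω) - ∫ x, (∑ i, X i x) ∂P}).toReal ≤
    Real.exp (-s * l 1 + s ^ 2 / 8 * ∑ i, (b i - a i) ^ 2) := by
  set μ : ℝ := ∫ x, (∑ i, X i x) ∂P with hμ
  set T : Ω → ℝ := fun ω => (∑ i, X i ω) - μ with hT_def
  have hT : Measurable T := (Finset.measurable_sum univ fun i _ => hXmeas i).sub_const μ
  have hA : ∀ k : ℕ, MeasurableSet {ω | l k ≤ T ω} :=
    fun k => measurableSet_le measurable_const hT
  have hPk : ∀ k : ℕ, (P {ω | l k ≤ T ω}).toReal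
      = ∫ ω, (if l k ≤ T ω then (1:ℝ) else 0) ∂P := by
    intro k
    rw [← Measure.real_def, ← integral_indicator_one (hA k)]
    refine integral_congr_ae (Filter.Eventually.of_forall fun ω => ?_)
    by_cases h : l k ≤ T ω <;> simp [Set.indicator_apply, Set.mem_setOf_eq, h]
  have hIint : ∀ k : ℕ, Integrable (fun ω => if l k ≤ T ω then (1:ℝ) else 0) P := by
    intro k
    have : (fun ω => if l k ≤ T ω then (1:ℝ) else 0)
        = Set.indicator {ω | l k ≤ T ω} (fun _ => 1) := by
      funext ω; simp [Set.indicator_apply, Set.mem_setOf_eq]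
    rw [this]
    exact (integrable_const 1).indicator (hA k)
  -- integrability of the exponential
  have hintexp : ∀ i : Fin N, Integrable (fun ω => Real.exp (s * X i ω)) P := by
    intro i
    refine Integrable.mono' (integrable_const (Real.exp (s * b i)))
      (((hXmeas i).const_mul s).exp).aestronglyMeasurable ?_
    filter_upwards [hbdd i] with ω hω
    rw [Real.norm_eq_abs, abs_of_pos (Real.exp_pos _)]
    exact Real.exp_le_exp.2 (mul_le_mul_of_nonneg_left hω.2 hs.le)
  have hintS : Integrable (fun ω => Real.exp (s * (∑ i, X i) ω)) P :=
    hindep.integrable_exp_mul_sum hXmeas fun i _ => hintexp i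
  have hintT : Integrable (fun ω => Real.exp (s * T ω)) P := by
    have : (fun ω => Real.exp (s * T ω))
        = fun ω => Real.exp (-(s * μ)) * Real.exp (s * (∑ i, X i) ω) := by
      funext ω
      rw [← Real.exp_add, Finset.sum_apply, hT_def]
      ring_nf
    rw [this]
    exact hintS.const_mul _
  have hintG : Integrable (fun ω => Real.exp (s * (T ω - l 1))) P := by
    have : (fun ω => Real.exp (s * (T ω - l 1)))
        = fun ω => Real.exp (-(s * l 1)) * Real.exp (s * T ω) := by
      funext ω
      rw [← Real.exp_add]
      ring_nf
    rw [this]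
    exact hintT.const_mul _
  -- rewrite LHS as an integral
  have hLHS : (P {ω | l 1 ≤ T ω}).toReal +
      ∑ k ∈ Finset.Icc 2 n,
        (Real.exp (s * (l k - l 1)) - Real.exp (s * (l (k - 1) - l 1))) *
          (P {ω | l k ≤ T ω}).toReal
      = ∫ ω, ((if l 1 ≤ T ω then (1:ℝ) else 0) +
          ∑ k ∈ Finset.Icc 2 n,
            (Real.exp (s * (l k - l 1)) - Real.exp (s * (l (k - 1) - l 1))) *
              (if l k ≤ T ω then (1:ℝ) else 0)) ∂P := by
    rw [integral_add (hIint 1) (integrable_finset_sum _ fun k _ => (hIint k).const_mul _)]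
    rw [integral_finset_sum _ fun k _ => (hIint k).const_mul _]
    rw [hPk 1]
    congr 1
    refine Finset.sum_congr rfl fun k _ => ?_
    rw [hPk k, integral_const_mul]
  rw [hLHS]
  have hmono := integral_mono (by
      exact (hIint 1).add (integrable_finset_sum _ fun k _ => (hIint k).const_mul _))
    hintG (fun ω => telescope hn hl1 hlmono hs (t := T ω))
  refine hmono.trans ?_
  have : ∫ ω, Real.exp (s * (T ω - l 1)) ∂P
      = Real.exp (-(s * l 1)) * ∫ ω, Real.exp (s * T ω) ∂P := by
    rw [← integral_const_mul]
    congr 1 with ω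
    rw [← Real.exp_add]
    ring_nf
  rw [this]
  have hHo := hoeffding_sum P hXmeas hindep hab hbdd hs.le
  calc Real.exp (-(s * l 1)) * ∫ ω, Real.exp (s * T ω) ∂P
      ≤ Real.exp (-(s * l 1)) * Real.exp (s ^ 2 / 8 * ∑ i, (b i - a i) ^ 2) := by
        gcongr
    _ = Real.exp (-s * l 1 + s ^ 2 / 8 * ∑ i, (b i - a i) ^ 2) := by
        rw [← Real.exp_add]
        congr 1
        ring
end

section
/- Let X₁, X₂, …, X_N be independent real-valued random variables on a probability space (Ω, 𝓕, ℙ) with aᵢ ≤ Xᵢ ≤ bᵢ almost surely for each i, where aᵢ < bᵢ, and let S_N = X₁ + X₂ + ⋯ + X_N. Let 0 < λ₁ < λ₂ < ⋯ < λₙ < ∞ and set s₀ = 4λ₁ / Σ_{i=1}^{N}(bᵢ − aᵢ)². Then ℙ(S_N − E(S_N) ≥ λ₁) + Σ_{k=2}^{n} [e^{s₀(λₖ − λ₁)} − e^{s₀(λₖ₋₁ − λ₁)}]·ℙ(S_N − E(S_N) ≥ λₖ) ≤ e^{−2λ₁² / Σ_{i=1}^{N}(bᵢ − aᵢ)²}.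 -/
open MeasureTheory Finset ProbabilityTheory

lemma aux_exp_bound {p : ℝ} (hp0 : 0 ≤ p) (hp1 : p ≤ 1) (u : ℝ) :
    1 - p + p * Real.exp u ≤ Real.exp (p * u + u ^ 2 / 8) := by
  set D : ℝ → ℝ := fun u => 1 - p + p * Real.exp u with hDdef
  have hD : ∀ u, 0 < D u := by
    intro u
    have h1 : 0 ≤ p * Real.exp u := mul_nonneg hp0 (Real.exp_pos u).le
    rcases eq_or_lt_of_le hp1 with h | h
    · have : 0 < p * Real.exp u := by
        rw [h]; simpa using Real.exp_pos u
      simp only [hDdef]; linarith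
    · simp only [hDdef]; linarith
  have hDdiff : ∀ u, HasDerivAt D (p * Real.exp u) u := by
    intro u
    exact ((Real.hasDerivAt_exp u).const_mul p).const_add (1 - p)
  set g : ℝ → ℝ := fun u => p + u / 4 - p * Real.exp u / D u with hgdef
  have hg : ∀ u, HasDerivAt g
      (1 / 4 - (p * Real.exp u * D u - p * Real.exp u * (p * Real.exp u)) / (D u) ^ 2) u := by
    intro u
    have h1 : HasDerivAt (fun u : ℝ => p * Real.exp u) (p * Real.exp u) u :=
      (Real.hasDerivAt_exp u).const_mul p
    have h2 := h1.div (hDdiff u) (hD u).ne'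
    have h3 : HasDerivAt (fun u : ℝ => p + u / 4) (1 / 4) u := by
      simpa using ((hasDerivAt_id u).div_const 4).const_add p
    exact h3.sub h2
  have hg' : ∀ u, 0 ≤ 1 / 4 - (p * Real.exp u * D u - p * Real.exp u * (p * Real.exp u)) / (D u) ^ 2 := by
    intro u
    have hDu2 : (0:ℝ) < (D u) ^ 2 := pow_pos (hD u) 2
    rw [sub_nonneg, div_le_iff₀ hDu2]
    have hDu : D u = 1 - p + p * Real.exp u := rfl
    nlinarith [sq_nonneg ((1 - p) - p * Real.exp u), Real.exp_pos u]
  have hgmono : Monotone g := by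
    apply monotone_of_deriv_nonneg (fun u => (hg u).differentiableAt)
    intro u
    rw [(hg u).deriv]
    exact hg' u
  have hg0 : g 0 = 0 := by
    simp [hgdef, hDdef]
  set f : ℝ → ℝ := fun u => p * u + u ^ 2 / 8 - Real.log (D u) with hfdef
  have hf : ∀ u, HasDerivAt f (g u) u := by
    intro u
    have h1 : HasDerivAt (fun u : ℝ => p * u + u ^ 2 / 8) (p + u / 4) u := by
      have := ((hasDerivAt_pow 2 u).div_const 8).const_add 0
      have h2 : HasDerivAt (fun u : ℝ => p * u) p u := by simpa using (hasDerivAt_id u).const_mul p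
      have h3 : HasDerivAt (fun u : ℝ => u ^ 2 / 8) (u / 4) u := by
        have := (hasDerivAt_pow 2 u).div_const 8
        exact this.congr_deriv (by ring)
      exact h2.add h3
    have h2 : HasDerivAt (fun u => Real.log (D u)) (p * Real.exp u / D u) u :=
      (hDdiff u).log (hD u).ne'
    exact h1.sub h2
  have hf0 : f 0 = 0 := by simp [hfdef, hDdef]
  have hfnonneg : ∀ u, 0 ≤ f u := by
    intro u
    have hcont : Continuous f := by
      have : Differentiable ℝ f := fun u => (hf u).differentiableAt
      exact this.continuous
    rcases le_total 0 u with h | h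
    · have hmono : MonotoneOn f (Set.Ici (0:ℝ)) := by
        apply monotoneOn_of_deriv_nonneg (convex_Ici 0) hcont.continuousOn
          (fun x _ => (hf x).differentiableAt.differentiableWithinAt)
        intro x hx
        rw [(hf x).deriv]
        rw [interior_Ici] at hx
        calc (0:ℝ) = g 0 := hg0.symm
        _ ≤ g x := hgmono (le_of_lt hx)
      calc (0:ℝ) = f 0 := hf0.symm
      _ ≤ f u := hmono Set.self_mem_Ici h h
    · have hmono : AntitoneOn f (Set.Iic (0:ℝ)) := by
        apply antitoneOn_of_deriv_nonpos (convex_Iic 0) hcont.continuousOn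
          (fun x _ => (hf x).differentiableAt.differentiableWithinAt)
        intro x hx
        rw [(hf x).deriv]
        rw [interior_Iic] at hx
        calc g x ≤ g 0 := hgmono (le_of_lt hx)
        _ = 0 := hg0
      calc (0:ℝ) = f 0 := hf0.symm
      _ ≤ f u := hmono h Set.self_mem_Iic h
  have hlog : Real.log (D u) ≤ p * u + u ^ 2 / 8 := by
    have := hfnonneg u
    simp only [hfdef] at this
    linarith
  calc D u = Real.exp (Real.log (D u)) := (Real.exp_log (hD u)).symm
  _ ≤ Real.exp (p * u + u ^ 2 / 8) := Real.exp_le_exp.2 hlog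

lemma hoeffding_mgf {Ω : Type*} [MeasurableSpace Ω] (P : Measure Ω) [IsProbabilityMeasure P]
    {Y : Ω → ℝ} (hY : Measurable Y) {a b : ℝ} (hab : a < b)
    (hbd : ∀ᵐ ω ∂P, Y ω ∈ Set.Icc a b) (t : ℝ) :
    ∫ ω, Real.exp (t * Y ω) ∂P ≤
      Real.exp (t * (∫ ω, Y ω ∂P) + t ^ 2 * (b - a) ^ 2 / 8) := by
  have hba : (0:ℝ) < b - a := sub_pos.2 hab
  set C : ℝ := max |a| |b| with hC
  have habs : ∀ᵐ ω ∂P, ‖Y ω‖ ≤ C := by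
    filter_upwards [hbd] with ω hω
    rw [Real.norm_eq_abs]
    rcases hω with ⟨h1, h2⟩
    rw [abs_le]
    constructor
    · calc -C ≤ -|a| := neg_le_neg (le_max_left _ _)
      _ ≤ a := neg_abs_le a
      _ ≤ Y ω := h1
    · calc Y ω ≤ b := h2
      _ ≤ |b| := le_abs_self b
      _ ≤ C := le_max_right _ _
  have hYint : Integrable Y P :=
    Integrable.mono' (integrable_const C) hY.aestronglyMeasurable habs
  set m : ℝ := ∫ ω, Y ω ∂P with hm
  have hma : a ≤ m := by
    have : ∫ _ω : Ω, a ∂P ≤ ∫ ω, Y ω ∂P :=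
      integral_mono_ae (integrable_const a) hYint (hbd.mono fun ω h => h.1)
    simpa using this
  have hmb : m ≤ b := by
    have : ∫ ω, Y ω ∂P ≤ ∫ _ω : Ω, b ∂P :=
      integral_mono_ae hYint (integrable_const b) (hbd.mono fun ω h => h.2)
    simpa using this
  have hexp_meas : Measurable fun ω => Real.exp (t * Y ω) := (hY.const_mul t).exp
  have hexp_int : Integrable (fun ω => Real.exp (t * Y ω)) P := by
    apply Integrable.mono' (integrable_const (Real.exp (|t| * C)))
      hexp_meas.aestronglyMeasurable
    filter_upwards [habs] with ω hω
    rw [Real.norm_eq_abs, abs_of_pos (Real.exp_pos _)]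
    apply Real.exp_le_exp.2
    calc t * Y ω ≤ |t * Y ω| := le_abs_self _
    _ = |t| * |Y ω| := abs_mul t (Y ω)
    _ ≤ |t| * C := by
        apply mul_le_mul_of_nonneg_left _ (abs_nonneg t)
        rw [Real.norm_eq_abs] at hω; exact hω
  set g : Ω → ℝ := fun ω =>
    (b - Y ω) / (b - a) * Real.exp (t * a) + (Y ω - a) / (b - a) * Real.exp (t * b) with hg
  have hgint : Integrable g P := by
    apply Integrable.add
    · exact (((integrable_const b).sub hYint).div_const (b - a)).mul_const _
    · exact ((hYint.sub (integrable_const a)).div_const (b - a)).mul_const _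
  have hptwise : ∀ᵐ ω ∂P, Real.exp (t * Y ω) ≤ g ω := by
    filter_upwards [hbd] with ω hω
    rcases hω with ⟨h1, h2⟩
    have hθ0 : 0 ≤ (b - Y ω) / (b - a) := div_nonneg (by linarith) hba.le
    have hθ'0 : 0 ≤ (Y ω - a) / (b - a) := div_nonneg (by linarith) hba.le
    have hsum : (b - Y ω) / (b - a) + (Y ω - a) / (b - a) = 1 := by
      field_simp
      ring
    have hkey := convexOn_exp.2 (Set.mem_univ (t * a)) (Set.mem_univ (t * b)) hθ0 hθ'0 hsum
    rw [smul_eq_mul, smul_eq_mul] at hkey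
    have hcomb : (b - Y ω) / (b - a) * (t * a) + (Y ω - a) / (b - a) * (t * b) = t * Y ω := by
      field_simp
      ring
    rw [hcomb] at hkey
    exact hkey
  have hstep1 : ∫ ω, Real.exp (t * Y ω) ∂P ≤ ∫ ω, g ω ∂P :=
    integral_mono_ae hexp_int hgint hptwise
  have hint1 : Integrable (fun ω => (b - Y ω) / (b - a) * Real.exp (t * a)) P :=
    (((integrable_const b).sub hYint).div_const (b - a)).mul_const _
  have hint2 : Integrable (fun ω => (Y ω - a) / (b - a) * Real.exp (t * b)) P :=
    ((hYint.sub (integrable_const a)).div_const (b - a)).mul_const _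
  have hstep2 : ∫ ω, g ω ∂P =
      (b - m) / (b - a) * Real.exp (t * a) + (m - a) / (b - a) * Real.exp (t * b) := by
    calc ∫ ω, g ω ∂P
        = (∫ ω, (b - Y ω) / (b - a) * Real.exp (t * a) ∂P)
          + ∫ ω, (Y ω - a) / (b - a) * Real.exp (t * b) ∂P := integral_add hint1 hint2
    _ = (b - m) / (b - a) * Real.exp (t * a) + (m - a) / (b - a) * Real.exp (t * b) := by
        congr 1
        · rw [integral_mul_const, integral_div, integral_sub (integrable_const b) hYint,
            integral_const]
          simp [hm]
        · rw [integral_mul_const, integral_div, integral_sub hYint (integrable_const a),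
            integral_const]
          simp [hm]
  set p : ℝ := (m - a) / (b - a) with hp
  set u : ℝ := t * (b - a) with hu
  have hp0 : 0 ≤ p := div_nonneg (by linarith) hba.le
  have hp1 : p ≤ 1 := by
    rw [hp, div_le_one hba]
    linarith
  have hkey := aux_exp_bound hp0 hp1 u
  have hEb : Real.exp (t * b) = Real.exp (t * a) * Real.exp u := by
    rw [← Real.exp_add]
    congr 1
    rw [hu]; ring
  have hfin : (b - m) / (b - a) * Real.exp (t * a) + (m - a) / (b - a) * Real.exp (t * b) ≤
      Real.exp (t * m + t ^ 2 * (b - a) ^ 2 / 8) := by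
    have h1 : (b - m) / (b - a) = 1 - p := by
      rw [hp]; field_simp
      ring
    calc (b - m) / (b - a) * Real.exp (t * a) + (m - a) / (b - a) * Real.exp (t * b)
        = (1 - p + p * Real.exp u) * Real.exp (t * a) := by
          rw [h1, hEb, hp]; ring
    _ ≤ Real.exp (p * u + u ^ 2 / 8) * Real.exp (t * a) :=
          mul_le_mul_of_nonneg_right hkey (Real.exp_pos _).le
    _ = Real.exp (t * m + t ^ 2 * (b - a) ^ 2 / 8) := by
          rw [← Real.exp_add]
          congr 1
          rw [hp, hu]
          field_simp
          ring
  calc ∫ ω, Real.exp (t * Y ω) ∂P ≤ ∫ ω, g ω ∂P := hstep1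
  _ = (b - m) / (b - a) * Real.exp (t * a) + (m - a) / (b - a) * Real.exp (t * b) := hstep2
  _ ≤ Real.exp (t * m + t ^ 2 * (b - a) ^ 2 / 8) := hfin

lemma telescope_chernoff {Ω : Type*} [MeasurableSpace Ω] (P : Measure Ω) [IsProbabilityMeasure P]
    {Y : Ω → ℝ} (hY : Measurable Y) {s₀ : ℝ} (hs₀ : 0 < s₀)
    (hint : Integrable (fun ω => Real.exp (s₀ * Y ω)) P)
    {n : ℕ} (hn : 1 ≤ n) {l : ℕ → ℝ}
    (hmono : ∀ j k, 1 ≤ j → j ≤ k → k ≤ n → l j ≤ l k) :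
    Real.exp (s₀ * l 1) * (P {ω | l 1 ≤ Y ω}).toReal +
      ∑ k ∈ Finset.Icc 2 n,
        (Real.exp (s₀ * l k) - Real.exp (s₀ * l (k - 1))) * (P {ω | l k ≤ Y ω}).toReal ≤
      ∫ ω, Real.exp (s₀ * Y ω) ∂P := by
  set q : ℝ → ℝ := fun t => (P {ω | t ≤ Y ω}).toReal with hqdef
  set J : ℝ → ℝ := fun t => ∫ ω in {ω | t ≤ Y ω}, Real.exp (s₀ * Y ω) ∂P with hJdef
  have hq' : ∀ t, (P {ω | t ≤ Y ω}).toReal = q t := fun _ => rfl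
  simp only [hq']
  have hAmeas : ∀ t : ℝ, MeasurableSet {ω | t ≤ Y ω} := fun t =>
    measurableSet_le measurable_const hY
  have hconst : ∀ (t : ℝ) (s : Set Ω), MeasurableSet s → s ⊆ {ω | t ≤ Y ω} →
      Real.exp (s₀ * t) * (P s).toReal ≤ ∫ ω in s, Real.exp (s₀ * Y ω) ∂P := by
    intro t s hs hsub
    rw [← measureReal_def]
    apply setIntegral_ge_of_const_le_real hs (measure_ne_top P s)
    · intro ω hω
      exact Real.exp_le_exp.2 (mul_le_mul_of_nonneg_left (hsub hω) hs₀.le)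
    · exact hint.integrableOn
  have hsub : ∀ t t' : ℝ, t ≤ t' → {ω | t' ≤ Y ω} ⊆ {ω | t ≤ Y ω} :=
    fun t t' h ω hω => le_trans h hω
  have hslice : ∀ t t' : ℝ, t ≤ t' →
      Real.exp (s₀ * t) * (q t - q t') ≤ J t - J t' := by
    intro t t' htt'
    have hsub' := hsub t t' htt'
    have hqd : q t - q t' = (P ({ω | t ≤ Y ω} \ {ω | t' ≤ Y ω})).toReal := by
      rw [measure_diff hsub' (hAmeas t').nullMeasurableSet (measure_ne_top P _),
        ENNReal.toReal_sub_of_le (measure_mono hsub') (measure_ne_top P _)]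
    have hJd : J t = (∫ ω in {ω | t ≤ Y ω} \ {ω | t' ≤ Y ω}, Real.exp (s₀ * Y ω) ∂P) + J t' := by
      calc J t = ∫ ω in ({ω | t ≤ Y ω} \ {ω | t' ≤ Y ω}) ∪ {ω | t' ≤ Y ω},
            Real.exp (s₀ * Y ω) ∂P := by rw [Set.diff_union_of_subset hsub']
      _ = _ := setIntegral_union disjoint_sdiff_self_left (hAmeas t')
            hint.integrableOn hint.integrableOn
    have hbound := hconst t ({ω | t ≤ Y ω} \ {ω | t' ≤ Y ω})
      ((hAmeas t).diff (hAmeas t')) Set.diff_subset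
    rw [hqd]
    linarith
  have key : ∀ m, 1 ≤ m → m ≤ n →
      Real.exp (s₀ * l 1) * q (l 1) +
        ∑ k ∈ Finset.Icc 2 m,
          (Real.exp (s₀ * l k) - Real.exp (s₀ * l (k - 1))) * q (l k) ≤
      J (l 1) - J (l m) + Real.exp (s₀ * l m) * q (l m) := by
    intro m hm
    induction m, hm using Nat.le_induction with
    | base =>
      intro _
      rw [show Finset.Icc 2 1 = ∅ from Finset.Icc_eq_empty (by omega), Finset.sum_empty]
      linarith
    | succ m hm ih =>
      intro hm1n
      have ihm := ih (by omega)
      rw [Finset.sum_Icc_succ_top (by omega : 2 ≤ m + 1)]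
      simp only [Nat.add_sub_cancel]
      have hstep := hslice (l m) (l (m + 1)) (hmono m (m + 1) hm (by omega) hm1n)
      nlinarith [hstep, ihm]
  have hfin := key n hn le_rfl
  have htop : Real.exp (s₀ * l n) * q (l n) ≤ J (l n) :=
    hconst (l n) {ω | l n ≤ Y ω} (hAmeas _) (fun ω h => h)
  have hJ1 : J (l 1) ≤ ∫ ω, Real.exp (s₀ * Y ω) ∂P :=
    setIntegral_le_integral hint (ae_of_all _ fun ω => (Real.exp_pos _).le)
  linarith

/-- **Generalization of Hoeffding's inequality.** For independent random
variables `Xᵢ ∈ [aᵢ, bᵢ]` a.s., `S_N = Σᵢ Xᵢ`, `0 < λ₁ < ⋯ < λₙ` and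
`s₀ = 4λ₁ / Σᵢ(bᵢ−aᵢ)²`,
`P(S_N − E(S_N) ≥ λ₁)
  + Σ_{k=2}^n (e^{s₀(λₖ−λ₁)} − e^{s₀(λₖ₋₁−λ₁)})·P(S_N − E(S_N) ≥ λₖ)
  ≤ e^{−2λ₁² / Σᵢ(bᵢ−aᵢ)²}`. -/
theorem generalized_hoeffding
    {Ω : Type*} [MeasurableSpace Ω] (P : Measure Ω) [IsProbabilityMeasure P]
    {N : ℕ} {X : Fin N → Ω → ℝ} (hXmeas : ∀ i, Measurable (X i))
    (hindep : iIndepFun X P)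
    {a b : Fin N → ℝ} (hab : ∀ i, a i < b i)
    (hbdd : ∀ i, ∀ᵐ ω ∂P, X i ω ∈ Set.Icc (a i) (b i))
    {n : ℕ} (hn : 1 ≤ n) {l : ℕ → ℝ}
    (hl1 : 0 < l 1)
    (hlmono : ∀ k, 1 ≤ k → k < n → l k < l (k + 1))
    {s₀ : ℝ} (hs₀ : s₀ = 4 * l 1 / ∑ i, (b i - a i) ^ 2) :
    (P {ω | l 1 ≤ (∑ i, X i ω) - ∫ x, (∑ i, X i x) ∂P}).toReal +
      ∑ k ∈ Finset.Icc 2 n,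
        (Real.exp (s₀ * (l k - l 1)) - Real.exp (s₀ * (l (k - 1) - l 1))) *
          (P {ω | l k ≤ (∑ i, X i ω) - ∫ x, (∑ i, X i x) ∂P}).toReal ≤
    Real.exp (-2 * l 1 ^ 2 / ∑ i, (b i - a i) ^ 2) := by
  have hlmono' : ∀ j k, 1 ≤ j → j ≤ k → k ≤ n → l j ≤ l k := by
    intro j k hj hjk
    induction k, hjk using Nat.le_induction with
    | base => intro _; exact le_rfl
    | succ k hk ih =>
      intro hk1n
      have h1 : l j ≤ l k := ih (by omega)
      have h2 : l k < l (k + 1) := hlmono k (by omega) (by omega)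
      linarith
  have hlpos : ∀ k, 1 ≤ k → k ≤ n → 0 < l k := fun k h1 h2 =>
    lt_of_lt_of_le hl1 (hlmono' 1 k le_rfl h1 h2)
  rcases Nat.eq_zero_or_pos N with hN | hN
  · subst hN
    have h0 : ∀ c : ℝ, 0 < c →
        ({ω : Ω | c ≤ (∑ i : Fin 0, X i ω) - ∫ x, (∑ i : Fin 0, X i x) ∂P} : Set Ω) = ∅ := by
      intro c hc
      ext ω
      simp only [Finset.univ_eq_empty, Finset.sum_empty, integral_zero, sub_zero,
        Set.mem_setOf_eq, Set.mem_empty_iff_false, iff_false, not_le]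
      exact hc
    rw [h0 (l 1) hl1]
    rw [Finset.sum_eq_zero (fun k hk => by
      have hk2 := Finset.mem_Icc.1 hk
      rw [h0 (l k) (hlpos k (by omega) hk2.2)]
      simp)]
    simp only [measure_empty, ENNReal.toReal_zero, add_zero]
    positivity
  · -- main case
    set V : ℝ := ∑ i, (b i - a i) ^ 2 with hVdef
    have hV : 0 < V := by
      apply Finset.sum_pos (fun i _ => pow_pos (sub_pos.2 (hab i)) 2)
      have : Nonempty (Fin N) := Fin.pos_iff_nonempty.1 hN
      exact Finset.univ_nonempty
    have hs₀pos : 0 < s₀ := by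
      rw [hs₀]
      exact div_pos (by linarith) hV
    -- integrability of each X i and of exp(s₀ X i)
    have habs : ∀ i, ∀ᵐ ω ∂P, |X i ω| ≤ max |a i| |b i| := by
      intro i
      filter_upwards [hbdd i] with ω hω
      rcases hω with ⟨h1, h2⟩
      rw [abs_le]
      constructor
      · linarith [neg_abs_le (a i), le_max_left |a i| |b i|]
      · linarith [le_abs_self (b i), le_max_right |a i| |b i|]
    have hXint : ∀ i, Integrable (X i) P := fun i =>
      Integrable.mono' (integrable_const (max |a i| |b i|)) (hXmeas i).aestronglyMeasurable
        ((habs i).mono fun ω h => by rwa [Real.norm_eq_abs])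
    have hexpXi : ∀ i, Integrable (fun ω => Real.exp (s₀ * X i ω)) P := by
      intro i
      apply Integrable.mono' (integrable_const (Real.exp (|s₀| * max |a i| |b i|)))
        ((hXmeas i).const_mul s₀).exp.aestronglyMeasurable
      filter_upwards [habs i] with ω hω
      rw [Real.norm_eq_abs, abs_of_pos (Real.exp_pos _)]
      apply Real.exp_le_exp.2
      calc s₀ * X i ω ≤ |s₀ * X i ω| := le_abs_self _
      _ = |s₀| * |X i ω| := abs_mul _ _
      _ ≤ |s₀| * max |a i| |b i| := mul_le_mul_of_nonneg_left hω (abs_nonneg s₀)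
    have hSmeas : Measurable (fun ω => ∑ i, X i ω) :=
      Finset.measurable_sum Finset.univ fun i _ => hXmeas i
    set μS : ℝ := ∫ x, (∑ i, X i x) ∂P with hμS
    have hYmeas : Measurable (fun ω => (∑ i, X i ω) - μS) := hSmeas.sub measurable_const
    -- integrability of exp (s₀ * S)
    have hexpS_int : Integrable (fun ω => Real.exp (s₀ * (∑ i, X i) ω)) P :=
      hindep.integrable_exp_mul_sum hXmeas (fun i _ => hexpXi i)
    have hexpY_int : Integrable (fun ω => Real.exp (s₀ * ((∑ i, X i ω) - μS))) P := by
      have heq : (fun ω => Real.exp (s₀ * ((∑ i, X i ω) - μS))) =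
          fun ω => Real.exp (s₀ * (∑ i, X i) ω) * Real.exp (-(s₀ * μS)) := by
        funext ω
        rw [← Real.exp_add]
        congr 1
        simp [Finset.sum_apply]
        ring
      rw [heq]
      exact hexpS_int.mul_const _
    -- mgf bound
    have hmgf : mgf (∑ i, X i) P s₀ = ∏ i, mgf (X i) P s₀ := hindep.mgf_sum hXmeas Finset.univ
    have hEXi : ∀ i, mgf (X i) P s₀ ≤
        Real.exp (s₀ * (∫ ω, X i ω ∂P) + s₀ ^ 2 * (b i - a i) ^ 2 / 8) := fun i =>
      hoeffding_mgf P (hXmeas i) (hab i) (hbdd i) s₀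
    have hprod : mgf (∑ i, X i) P s₀ ≤ Real.exp (s₀ * μS + s₀ ^ 2 * V / 8) := by
      rw [hmgf]
      calc ∏ i, mgf (X i) P s₀
          ≤ ∏ i, Real.exp (s₀ * (∫ ω, X i ω ∂P) + s₀ ^ 2 * (b i - a i) ^ 2 / 8) :=
            Finset.prod_le_prod (fun i _ => mgf_nonneg) (fun i _ => hEXi i)
      _ = Real.exp (∑ i, (s₀ * (∫ ω, X i ω ∂P) + s₀ ^ 2 * (b i - a i) ^ 2 / 8)) :=
            (Real.exp_sum _ _).symm
      _ = Real.exp (s₀ * μS + s₀ ^ 2 * V / 8) := by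
            congr 1
            rw [Finset.sum_add_distrib, ← Finset.mul_sum,
              ← integral_finset_sum Finset.univ (fun i _ => hXint i)]
            congr 1
            rw [hVdef, Finset.mul_sum, Finset.sum_div]
    -- key integral bound on centered variable
    have hJ : ∫ ω, Real.exp (s₀ * ((∑ i, X i ω) - μS)) ∂P ≤ Real.exp (s₀ ^ 2 * V / 8) := by
      have heq : (fun ω => Real.exp (s₀ * ((∑ i, X i ω) - μS))) =
          fun ω => Real.exp (s₀ * (∑ i, X i) ω) * Real.exp (-(s₀ * μS)) := by
        funext ω
        rw [← Real.exp_add]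
        congr 1
        simp [Finset.sum_apply]
        ring
      calc ∫ ω, Real.exp (s₀ * ((∑ i, X i ω) - μS)) ∂P
          = (∫ ω, Real.exp (s₀ * (∑ i, X i) ω) ∂P) * Real.exp (-(s₀ * μS)) := by
            rw [heq, integral_mul_const]
      _ ≤ Real.exp (s₀ * μS + s₀ ^ 2 * V / 8) * Real.exp (-(s₀ * μS)) := by
            apply mul_le_mul_of_nonneg_right _ (Real.exp_pos _).le
            exact hprod
      _ = Real.exp (s₀ ^ 2 * V / 8) := by
            rw [← Real.exp_add]
            congr 1
            ring
    have tele := telescope_chernoff P hYmeas hs₀pos hexpY_int hn hlmono'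
    have hcoef : ∀ x : ℝ, Real.exp (s₀ * (x - l 1)) =
        Real.exp (s₀ * x) * Real.exp (-(s₀ * l 1)) := by
      intro x
      rw [← Real.exp_add]
      congr 1
      ring
    calc (P {ω | l 1 ≤ (∑ i, X i ω) - μS}).toReal +
        ∑ k ∈ Finset.Icc 2 n,
          (Real.exp (s₀ * (l k - l 1)) - Real.exp (s₀ * (l (k - 1) - l 1))) *
            (P {ω | l k ≤ (∑ i, X i ω) - μS}).toReal
        = (Real.exp (s₀ * l 1) * (P {ω | l 1 ≤ (∑ i, X i ω) - μS}).toReal +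
            ∑ k ∈ Finset.Icc 2 n,
              (Real.exp (s₀ * l k) - Real.exp (s₀ * l (k - 1))) *
                (P {ω | l k ≤ (∑ i, X i ω) - μS}).toReal) * Real.exp (-(s₀ * l 1)) := by
          rw [add_mul, Finset.sum_mul]
          congr 1
          · rw [mul_right_comm, ← Real.exp_add]
            simp
          · apply Finset.sum_congr rfl
            intro k _
            rw [hcoef (l k), hcoef (l (k - 1))]
            ring
    _ ≤ (∫ ω, Real.exp (s₀ * ((∑ i, X i ω) - μS)) ∂P) * Real.exp (-(s₀ * l 1)) :=
          mul_le_mul_of_nonneg_right tele (Real.exp_pos _).le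
    _ ≤ Real.exp (s₀ ^ 2 * V / 8) * Real.exp (-(s₀ * l 1)) :=
          mul_le_mul_of_nonneg_right hJ (Real.exp_pos _).le
    _ = Real.exp (-2 * l 1 ^ 2 / V) := by
          rw [← Real.exp_add]
          congr 1
          rw [hs₀]
          field_simp
          ring
end

section
/- Let X be a real-valued random variable on a probability space (Ω, 𝓕, ℙ) with finite expected value E(X) and finite variance σ² > 0, and let k > 1 be a real number. Then ℙ(|X − E(X)| ≥ kσ) ≤ (1/(k² − 1))·ℙ(|X − E(X)| < σ). -/
open MeasureTheory ProbabilityTheory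

/-- For a random variable `X` with finite positive variance `σ²` (standard
deviation `σ > 0`) and `k > 1`,
`P(|X − E(X)| ≥ kσ) ≤ (1/(k² − 1))·P(|X − E(X)| < σ)`. -/
theorem chebyshev_two_level
    {Ω : Type*} [MeasurableSpace Ω] (P : Measure Ω) [IsProbabilityMeasure P]
    {X : Ω → ℝ} (hX : Measurable X) (hX2 : MemLp X 2 P)
    (hvar : 0 < variance X P)
    {k : ℝ} (hk : 1 < k) :
    (P {ω | k * Real.sqrt (variance X P) ≤ |X ω - ∫ x, X x ∂P|}).toReal ≤
      1 / (k ^ 2 - 1) *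
        (P {ω | |X ω - ∫ x, X x ∂P| < Real.sqrt (variance X P)}).toReal := by
  set μ := ∫ x, X x ∂P with hμ
  set σ := Real.sqrt (variance X P) with hσdef
  have hσ : 0 < σ := Real.sqrt_pos.2 hvar
  have hσ2 : σ ^ 2 = variance X P := Real.sq_sqrt hvar.le
  set f : Ω → ℝ := fun ω => (X ω - μ) ^ 2 with hfdef
  have hf_int : Integrable f P := (hX2.sub (memLp_const μ)).integrable_sq
  have hf_nonneg : ∀ ω, 0 ≤ f ω := fun ω => sq_nonneg _
  set A : Set Ω := {ω | k * σ ≤ |X ω - μ|} with hAdef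
  set B : Set Ω := {ω | |X ω - μ| < σ} with hBdef
  have hYm : Measurable fun ω => |X ω - μ| := (hX.sub measurable_const).abs
  have hA : MeasurableSet A := measurableSet_le measurable_const hYm
  have hB : MeasurableSet B := measurableSet_lt hYm measurable_const
  set C : Set Ω := Aᶜ ∩ Bᶜ with hCdef
  have hC : MeasurableSet C := hA.compl.inter hB.compl
  have hABdisj : Disjoint A B := by
    rw [Set.disjoint_left]
    intro ω hωA hωB
    have h1 : k * σ ≤ |X ω - μ| := hωA
    have h2 : |X ω - μ| < σ := hωB
    nlinarith
  have hACdisj : Disjoint A C := by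
    rw [Set.disjoint_left]
    intro ω hωA hωC
    exact hωC.1 hωA
  -- measure arithmetic
  have hfin : ∀ s : Set Ω, P s ≠ ⊤ := fun s => (measure_lt_top P s).ne
  have hc_eq : (P C).toReal = 1 - (P A).toReal - (P B).toReal := by
    have hcompl : C = (A ∪ B)ᶜ := by
      rw [hCdef, Set.compl_union]
    have h1 : P (A ∪ B) = P A + P B := measure_union hABdisj hB
    have h2 : P C = 1 - P (A ∪ B) := by
      rw [hcompl, measure_compl (hA.union hB) (hfin _), measure_univ]
    rw [h2, h1, ENNReal.toReal_sub_of_le (by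
      calc P A + P B = P (A ∪ B) := h1.symm
        _ ≤ 1 := prob_le_one) (by simp), ENNReal.toReal_add (hfin _) (hfin _), ENNReal.toReal_one]
    ring
  -- lower bounds on set integrals
  have hintA : (k * σ) ^ 2 * (P A).toReal ≤ ∫ ω in A, f ω ∂P := by
    apply setIntegral_ge_of_const_le_real hA (hfin A)
    · intro ω hω
      have : k * σ ≤ |X ω - μ| := hω
      calc (k * σ) ^ 2 ≤ |X ω - μ| ^ 2 := by
            apply pow_le_pow_left₀ (by positivity) this
        _ = f ω := by rw [sq_abs]
    · exact hf_int.integrableOn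
  have hintC : σ ^ 2 * (P C).toReal ≤ ∫ ω in C, f ω ∂P := by
    apply setIntegral_ge_of_const_le_real hC (hfin C)
    · intro ω hω
      have : σ ≤ |X ω - μ| := not_lt.1 hω.2
      calc σ ^ 2 ≤ |X ω - μ| ^ 2 := pow_le_pow_left₀ hσ.le this 2
        _ = f ω := by rw [sq_abs]
    · exact hf_int.integrableOn
  have hvar_eq : variance X P = ∫ ω, f ω ∂P := by
    rw [variance_eq_integral hX.aemeasurable]
  have hsplit : ∫ ω in A ∪ C, f ω ∂P = (∫ ω in A, f ω ∂P) + ∫ ω in C, f ω ∂P :=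
    setIntegral_union hACdisj hC hf_int.integrableOn hf_int.integrableOn
  have hle : ∫ ω in A ∪ C, f ω ∂P ≤ ∫ ω, f ω ∂P :=
    setIntegral_le_integral hf_int (ae_of_all _ hf_nonneg)
  have hmain : (k * σ) ^ 2 * (P A).toReal + σ ^ 2 * (P C).toReal ≤ σ ^ 2 := by
    calc (k * σ) ^ 2 * (P A).toReal + σ ^ 2 * (P C).toReal
        ≤ (∫ ω in A, f ω ∂P) + ∫ ω in C, f ω ∂P := add_le_add hintA hintC
      _ = ∫ ω in A ∪ C, f ω ∂P := hsplit.symm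
      _ ≤ ∫ ω, f ω ∂P := hle
      _ = σ ^ 2 := by rw [← hvar_eq, ← hσ2]
  set a := (P A).toReal with ha
  set b := (P B).toReal with hb
  have ha0 : 0 ≤ a := ENNReal.toReal_nonneg
  have hb0 : 0 ≤ b := ENNReal.toReal_nonneg
  rw [hc_eq] at hmain
  have hk2 : 0 < k ^ 2 - 1 := by nlinarith
  have key : (k ^ 2 - 1) * a ≤ b := by nlinarith [sq_nonneg σ, mul_pos hσ hσ]
  rw [div_mul_eq_mul_div, one_mul, le_div_iff₀ hk2]
  linarith
end

section
/- Let X be a real-valued random variable on a probability space (Ω, 𝓕, ℙ) with finite expected value E(X) and finite variance σ² > 0, and let 0 < λ₁ < λ₂. Then ℙ(X − E(X) ≥ λ₁) + [((λ₁λ₂ + σ²)² − (λ₁² + σ²)²)/(λ₁² + σ²)²]·ℙ(X − E(X) ≥ λ₂) ≤ σ²/(σ² + λ₁²). -/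
open MeasureTheory ProbabilityTheory

/-- The `n = 2` instance of the generalized Cantelli inequality: for a random
variable `X` with finite positive variance `σ²` and `0 < λ₁ < λ₂`,
`P(X − E(X) ≥ λ₁)
  + ((λ₁λ₂ + σ²)² − (λ₁² + σ²)²)/(λ₁² + σ²)² · P(X − E(X) ≥ λ₂)
  ≤ σ²/(σ² + λ₁²)`. -/
theorem cantelli_two_level
    {Ω : Type*} [MeasurableSpace Ω] (P : Measure Ω) [IsProbabilityMeasure P]
    {X : Ω → ℝ} (hX : Measurable X) (hX2 : MemLp X 2 P)
    (hvar : 0 < variance X P)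
    {l₁ l₂ : ℝ} (hl₁ : 0 < l₁) (hl₁₂ : l₁ < l₂) :
    (P {ω | l₁ ≤ X ω - ∫ x, X x ∂P}).toReal +
      ((l₁ * l₂ + variance X P) ^ 2 - (l₁ ^ 2 + variance X P) ^ 2) /
          (l₁ ^ 2 + variance X P) ^ 2 *
        (P {ω | l₂ ≤ X ω - ∫ x, X x ∂P}).toReal ≤
      variance X P / (variance X P + l₁ ^ 2) := by
  set μ := ∫ x, X x ∂P with hμdef
  set s := variance X P with hsdef
  set a := s / l₁ with hadef
  have hl₁0 : (l₁ : ℝ) ≠ 0 := hl₁.ne'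
  have ha0 : 0 < a := div_pos hvar hl₁
  have hint : Integrable X P := hX2.integrable one_le_two
  have hYmem : MemLp (fun ω => X ω - μ) 2 P := hX2.sub (memLp_const μ)
  have hY2 : Integrable (fun ω => (X ω - μ) ^ 2) P := by
    simpa [pow_two] using hYmem.integrable_sq
  have hYint : Integrable (fun ω => X ω - μ) P := hint.sub (integrable_const μ)
  have hEY : ∫ ω, (X ω - μ) ∂P = 0 := by
    rw [integral_sub hint (integrable_const μ), integral_const]
    simp [hμdef]
  have hvar_eq : ∫ ω, (X ω - μ) ^ 2 ∂P = s := by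
    rw [hsdef, variance_eq_integral hX.aemeasurable]
  -- the shifted second moment
  have hg : ∫ ω, (X ω - μ + a) ^ 2 ∂P = s + a ^ 2 := by
    have he : ∀ ω, (X ω - μ + a) ^ 2
        = (X ω - μ) ^ 2 + (2 * a) * (X ω - μ) + a ^ 2 := by intro ω; ring
    simp_rw [he]
    have hfg : Integrable (fun ω => (X ω - μ) ^ 2 + 2 * a * (X ω - μ)) P :=
      hY2.add (hYint.const_mul (2 * a))
    rw [integral_add hfg (integrable_const _),
        integral_add hY2 (hYint.const_mul (2 * a)), integral_const_mul, hEY, hvar_eq,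
        integral_const]
    simp
  -- sets
  set A₁ : Set Ω := {ω | l₁ ≤ X ω - μ} with hA₁def
  set A₂ : Set Ω := {ω | l₂ ≤ X ω - μ} with hA₂def
  have hA₁ : MeasurableSet A₁ := measurableSet_le measurable_const (hX.sub measurable_const)
  have hA₂ : MeasurableSet A₂ := measurableSet_le measurable_const (hX.sub measurable_const)
  have hsub : A₂ ⊆ A₁ := fun ω hω => le_trans hl₁₂.le hω
  set c₁ : ℝ := (l₁ + a) ^ 2 with hc₁def
  set c₂ : ℝ := (l₂ + a) ^ 2 - (l₁ + a) ^ 2 with hc₂def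
  -- pointwise bound
  have hpt : ∀ ω, A₁.indicator (fun _ => c₁) ω + A₂.indicator (fun _ => c₂) ω
      ≤ (X ω - μ + a) ^ 2 := by
    intro ω
    by_cases h2 : ω ∈ A₂
    · have h1 : ω ∈ A₁ := hsub h2
      rw [Set.indicator_of_mem h1, Set.indicator_of_mem h2]
      have : l₂ + a ≤ X ω - μ + a := by
        have := h2; simp only [hA₂def, Set.mem_setOf_eq] at this; linarith
      have hle : (l₂ + a) ^ 2 ≤ (X ω - μ + a) ^ 2 :=
        pow_le_pow_left₀ (by linarith) this 2
      simp only [hc₁def, hc₂def]; linarith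
    · rw [Set.indicator_of_notMem h2, add_zero]
      by_cases h1 : ω ∈ A₁
      · rw [Set.indicator_of_mem h1]
        have : l₁ + a ≤ X ω - μ + a := by
          have := h1; simp only [hA₁def, Set.mem_setOf_eq] at this; linarith
        exact pow_le_pow_left₀ (by positivity) this 2
      · rw [Set.indicator_of_notMem h1]; positivity
  have hi₁ : Integrable (A₁.indicator (fun _ => c₁)) P :=
    (integrable_const c₁).indicator hA₁
  have hi₂ : Integrable (A₂.indicator (fun _ => c₂)) P :=
    (integrable_const c₂).indicator hA₂
  have hg_int : Integrable (fun ω => (X ω - μ + a) ^ 2) P := by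
    have : MemLp (fun ω => X ω - μ + a) 2 P := hYmem.add (memLp_const a)
    simpa [pow_two] using this.integrable_sq
  have hmono : ∫ ω, (A₁.indicator (fun _ => c₁) ω + A₂.indicator (fun _ => c₂) ω) ∂P
      ≤ ∫ ω, (X ω - μ + a) ^ 2 ∂P :=
    integral_mono (hi₁.add hi₂) hg_int hpt
  have hind : ∫ ω, (A₁.indicator (fun _ => c₁) ω + A₂.indicator (fun _ => c₂) ω) ∂P
      = c₁ * (P A₁).toReal + c₂ * (P A₂).toReal := by
    rw [integral_add hi₁ hi₂, integral_indicator_const _ hA₁, integral_indicator_const _ hA₂]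
    simp [mul_comm, Measure.real]
  have hyp : c₁ * (P A₁).toReal + c₂ * (P A₂).toReal ≤ s + a ^ 2 := by
    rw [← hind, ← hg]; exact hmono
  set p := (P A₁).toReal with hpdef
  set q := (P A₂).toReal with hqdef
  have hp0 : 0 ≤ p := ENNReal.toReal_nonneg
  have hq0 : 0 ≤ q := ENNReal.toReal_nonneg
  -- clear the auxiliary `a = s / l₁`
  have key : (l₁ ^ 2 + s) ^ 2 * p + ((l₁ * l₂ + s) ^ 2 - (l₁ ^ 2 + s) ^ 2) * q
      ≤ s * (l₁ ^ 2 + s) := by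
    have h' := mul_le_mul_of_nonneg_right hyp (pow_pos hl₁ 2).le
    have e1 : (c₁ * p + c₂ * q) * l₁ ^ 2
        = (l₁ ^ 2 + s) ^ 2 * p + ((l₁ * l₂ + s) ^ 2 - (l₁ ^ 2 + s) ^ 2) * q := by
      rw [hc₁def, hc₂def, hadef]; field_simp
    have e2 : (s + a ^ 2) * l₁ ^ 2 = s * (l₁ ^ 2 + s) := by
      rw [hadef]; field_simp
    rw [e1, e2] at h'
    exact h'
  have hd : (0 : ℝ) < (l₁ ^ 2 + s) ^ 2 := by positivity
  have eL : p + ((l₁ * l₂ + s) ^ 2 - (l₁ ^ 2 + s) ^ 2) / (l₁ ^ 2 + s) ^ 2 * q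
      = ((l₁ ^ 2 + s) ^ 2 * p + ((l₁ * l₂ + s) ^ 2 - (l₁ ^ 2 + s) ^ 2) * q)
        / (l₁ ^ 2 + s) ^ 2 := by
    field_simp
  have eR : s / (s + l₁ ^ 2) = s * (l₁ ^ 2 + s) / (l₁ ^ 2 + s) ^ 2 := by
    have h2 : (l₁ ^ 2 + s) ≠ 0 := by positivity
    field_simp
    ring
  rw [eL, eR]
  exact div_le_div_of_nonneg_right key hd.le
end
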